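/- arXiv:0911.3810 — 4 statements merged into one kernel-verified Lean document; each statement's English description precedes it below -/
import Mathlib

section
/- Let F be a forest with at least one edge and let r ≥ 2 be an integer, and let k*(F,r) be the smallest integer k for which Builder has a winning strategy in the deterministic F-avoidance game with r colors and tree size restriction k. Then there exists a sequence of online Painter strategies with r colors (one for each board size n) such that for every function N : ℕ → ℕ with N(n) = o(n^{1−1/k*(F,r)}), the probability that the board G_{N(n)} of the online F-avoidance game with r colors on n vertices contains a monochromatic copy of F tends to 0 as n → ∞. In particular, any winning strategy for Painter in the deterministic F-avoidance game with r colors and tree size restriction k*(F,r)−1, used online, has this property. -/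
open SimpleGraph Filter Asymptotics
open scoped Classical

/-- A history of the game: the sequence of edges presented so far, together with
the colors (elements of `Fin r`, representing the colors `1,…,r`) they received. -/
abbrev EdgeHistory (V : Type) (r : ℕ) := List (Sym2 V × Fin r)

/-- A Painter strategy on vertex type `V` with `r` colors: a function assigning a color
to every pair (history, new edge). -/
abbrev PainterStrategy (V : Type) (r : ℕ) := EdgeHistory V r → Sym2 V → Fin r

/-- Auxiliary function: run a Painter strategy on a list of presented edges,
extending the given history. -/
def runPainterAux {V : Type} {r : ℕ} (π : PainterStrategy V r) :
    EdgeHistory V r → List (Sym2 V) → EdgeHistory V r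
  | h, [] => h
  | h, e :: es => runPainterAux π (h ++ [(e, π h e)]) es

/-- The colored history obtained by coloring the edges of `l` successively
according to the Painter strategy `π`. -/
def runPainter {V : Type} {r : ℕ} (π : PainterStrategy V r) (l : List (Sym2 V)) :
    EdgeHistory V r :=
  runPainterAux π [] l

/-- `G` contains a copy of `F`, i.e. a subgraph isomorphic to `F`. -/
def IsCopy {α β : Type} (F : SimpleGraph α) (G : SimpleGraph β) : Prop :=
  ∃ f : α ↪ β, ∀ u v : α, F.Adj u v → G.Adj (f u) (f v)

/-- The graph formed by the edges of color `c` in the history `h`. -/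
def colorGraph {V : Type} {r : ℕ} (h : EdgeHistory V r) (c : Fin r) : SimpleGraph V :=
  SimpleGraph.fromEdgeSet {e | (e, c) ∈ h}

/-- The history `h` contains a monochromatic copy of `F`. -/
def HasMonoCopy {α V : Type} {r : ℕ} (F : SimpleGraph α) (h : EdgeHistory V r) : Prop :=
  ∃ c : Fin r, IsCopy F (colorGraph h c)

/-- The number of edges of `G` lying entirely within the vertex set `S`. -/
noncomputable def edgesWithin {V : Type} (G : SimpleGraph V) (S : Set V) : ℕ :=
  (G.edgeSet ∩ {e | ∀ v ∈ e, v ∈ S}).ncard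

/-- `m(G) ≤ d`: every subgraph `H` of `G` with at least one vertex satisfies `e_H ≤ d · v_H`. -/
def DensityLE {V : Type} (G : SimpleGraph V) (d : ℝ) : Prop :=
  ∀ S : Finset V, S.Nonempty → (edgesWithin G (↑S : Set V) : ℝ) ≤ d * (S.card : ℝ)

/-- `G` contains no cycle and every connected component of `G` has at most `k` edges
(equivalently, `G` is acyclic and contains no connected subgraph with more than `k` edges). -/
def TreeSizeLE {V : Type} (G : SimpleGraph V) (k : ℕ) : Prop :=
  G.IsAcyclic ∧ ∀ S : Set V, (G.induce S).Connected → edgesWithin G S ≤ k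

/-- A legal sequence of moves for Builder: distinct non-loop edges. -/
def ValidEdgeSeq {V : Type} (l : List (Sym2 V)) : Prop :=
  l.Nodup ∧ ∀ e ∈ l, ¬ e.IsDiag

/-- The (uncolored) board formed by a list of edges. -/
def boardOf {V : Type} (l : List (Sym2 V)) : SimpleGraph V :=
  SimpleGraph.fromEdgeSet {e | e ∈ l}

/-- Builder has a winning strategy in the deterministic `F`-avoidance game with `r` colors
and density restriction `d`. -/
def BuilderWinsDensity {α : Type} (F : SimpleGraph α) (r : ℕ) (d : ℝ) : Prop :=
  ∃ a : ℕ, ∀ π : PainterStrategy (Fin a) r, ∃ l : List (Sym2 (Fin a)),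
    ValidEdgeSeq l ∧ (∀ i : ℕ, DensityLE (boardOf (l.take i)) d) ∧
    HasMonoCopy F (runPainter π l)

/-- Builder has a winning strategy in the deterministic `F`-avoidance game with `r` colors
and tree size restriction `k`. -/
def BuilderWinsTree {α : Type} (F : SimpleGraph α) (r k : ℕ) : Prop :=
  ∃ a : ℕ, ∀ π : PainterStrategy (Fin a) r, ∃ l : List (Sym2 (Fin a)),
    ValidEdgeSeq l ∧ (∀ i : ℕ, TreeSizeLE (boardOf (l.take i)) k) ∧
    HasMonoCopy F (runPainter π l)

/-- The Painter strategy `π` on `a` vertices never creates a monochromatic copy of `F`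
against any Builder play obeying the tree size restriction `k`. -/
def PainterAvoidsTree {α : Type} (F : SimpleGraph α) (r k a : ℕ)
    (π : PainterStrategy (Fin a) r) : Prop :=
  ∀ l : List (Sym2 (Fin a)), ValidEdgeSeq l →
    (∀ i : ℕ, TreeSizeLE (boardOf (l.take i)) k) →
    ¬ HasMonoCopy F (runPainter π l)

/-- Painter has a winning strategy in the deterministic `F`-avoidance game with `r` colors
and tree size restriction `k`. -/
def PainterWinsTree {α : Type} (F : SimpleGraph α) (r k : ℕ) : Prop :=
  ∀ a : ℕ, ∃ π : PainterStrategy (Fin a) r, PainterAvoidsTree F r k a π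

/-- A sequence of `N` distinct non-loop edges on `n` vertices. -/
def ValidSeqFun {n N : ℕ} (f : Fin N → Sym2 (Fin n)) : Prop :=
  Function.Injective f ∧ ∀ i, ¬ (f i).IsDiag

/-- The probability (with respect to the uniformly random order in which the `N` distinct
edges of the random process on `n` vertices appear) of the event `P`. -/
noncomputable def onlineProb (n N : ℕ) (P : (Fin N → Sym2 (Fin n)) → Prop) : ℝ :=
  (Set.ncard {f : Fin N → Sym2 (Fin n) | ValidSeqFun f ∧ P f} : ℝ) /
  (Set.ncard {f : Fin N → Sym2 (Fin n) | ValidSeqFun f} : ℝ)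

/-- Event: playing the online strategy `π` on the random edge sequence `f` produces
a monochromatic copy of `F`. -/
def OnlineMonoCopy {α : Type} (F : SimpleGraph α) {r n N : ℕ}
    (π : PainterStrategy (Fin n) r) (f : Fin N → Sym2 (Fin n)) : Prop :=
  HasMonoCopy F (runPainter π (List.ofFn f))


-- arithmetic
lemma aux_desc_split {M N m : ℕ} (hm : m ≤ N) :
    M.descFactorial N = (M - (N - m)).descFactorial m * M.descFactorial (N - m) := by
  have := Nat.descFactorial_mul_descFactorial (k := N - m) (m := N) (n := M) (by omega)
  rw [show N - (N - m) = m by omega] at this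
  omega

lemma aux_desc_lower {M N m : ℕ} (hm : m ≤ N) (hN : N ≤ M) :
    (M - N) ^ m ≤ (M - (N - m)).descFactorial m := by
  calc (M - N) ^ m ≤ (M - (N - m) + 1 - m) ^ m := by
        apply Nat.pow_le_pow_left; omega
    _ ≤ _ := Nat.pow_sub_le_descFactorial _ _

-- ncard union bound
lemma aux_ncard_iUnion_le {ι X : Type*} [Fintype ι] [Fintype X] (s : ι → Set X) :
    (⋃ i, s i).ncard ≤ ∑ i, (s i).ncard := by
  classical
  simp only [Set.ncard_eq_toFinset_card']
  rw [Set.toFinset_iUnion]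
  exact Finset.card_biUnion_le
section AuxGraph

variable {V : Type}

lemma aux_sym2_decomp (e : Sym2 V) : ∃ x y : V, e = s(x, y) := by
  induction e using Sym2.ind with
  | _ x y => exact ⟨x, y, rfl⟩

lemma aux_walk_take {G : SimpleGraph V} {a b : V} (w : G.Walk a b) :
    ∀ (j : ℕ), ∀ e ∈ w.edges.take j, ∀ x ∈ e, x ∈ w.support.take (j + 1) := by
  induction w with
  | nil => simp
  | @cons u v c h p ih =>
    intro j e he x hx
    cases j with
    | zero => simp at he
    | succ j =>
      rw [SimpleGraph.Walk.edges_cons, List.take_succ_cons] at he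
      rw [SimpleGraph.Walk.support_cons, List.take_succ_cons]
      rcases List.mem_cons.mp he with rfl | he
      · rcases Sym2.mem_iff.mp hx with rfl | rfl
        · exact List.mem_cons_self
        · refine List.mem_cons_of_mem _ ?_
          rw [p.support_eq_cons, List.take_succ_cons]
          exact List.mem_cons_self
      · exact List.mem_cons_of_mem _ (ih j e he x hx)

lemma aux_cycle_mem_tail {G : SimpleGraph V} {v : V} (c : G.Walk v v) (hc : 0 < c.length) :
    v ∈ c.support.tail := by
  have hne : c.support.tail ≠ [] := by
    have hls := c.length_support
    intro h
    rw [c.support_eq_cons, h, List.length_cons, List.length_nil] at hls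
    omega
  have h1 : c.support.getLast? = some v := by
    rw [List.getLast?_eq_getLast_of_ne_nil (l := c.support) (by simp), c.getLast_support]
  obtain ⟨b, t', ht⟩ := List.exists_cons_of_ne_nil hne
  rw [c.support_eq_cons, ht, List.getLast?_cons_cons] at h1
  rw [ht]
  exact List.mem_of_mem_getLast? h1

lemma aux_escape {G : SimpleGraph V} {S : Set V} {E : Finset (Sym2 V)} {T : Finset V}
    (hE : ∀ e ∈ E, ∀ x ∈ e, x ∈ T) :
    ∀ {a b : ↑S} (_ : (G.induce S).Walk a b), (a : V) ∈ T →
      (∃ e : Sym2 V, e ∈ G.edgeSet ∧ (∀ x ∈ e, x ∈ S) ∧ e ∉ E ∧ ∃ x ∈ e, x ∈ T) ∨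
        (b : V) ∈ T := by
  intro a b w
  induction w with
  | nil => exact fun h => Or.inr h
  | @cons x y z h p ih =>
    intro hx
    by_cases hmem : s((x : V), (y : V)) ∈ E
    · exact ih (hE _ hmem _ (Sym2.mem_mk_right _ _))
    · refine Or.inl ⟨s((x : V), (y : V)), ?_, ?_, hmem, ⟨x, Sym2.mem_mk_left _ _, hx⟩⟩
      · simpa using h
      · intro t ht
        rcases Sym2.mem_iff.mp ht with rfl | rfl
        · exact x.2
        · exact y.2

lemma aux_greedy [Fintype V] {G : SimpleGraph V} {S : Set V}
    (hconn : (G.induce S).Connected) {k : ℕ} (hk : 1 ≤ k) (hcard : k ≤ edgesWithin G S) :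
    ∃ E : Finset (Sym2 V), (↑E : Set (Sym2 V)) ⊆ G.edgeSet ∧ E.card = k ∧
      ∃ T : Finset V, (∀ e ∈ E, ∀ x ∈ e, x ∈ T) ∧ T.card ≤ k + 1 := by
  classical
  set W : Set (Sym2 V) := G.edgeSet ∩ {e | ∀ v ∈ e, v ∈ S} with hW
  have hWF : W.toFinset.card = edgesWithin G S := by
    rw [edgesWithin, Set.ncard_eq_toFinset_card']
  -- invariant construction
  have key : ∀ j : ℕ, 1 ≤ j → j ≤ k →
      ∃ E : Finset (Sym2 V), E ⊆ W.toFinset ∧ E.card = j ∧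
        ∃ T : Finset V, (∀ e ∈ E, ∀ x ∈ e, x ∈ T) ∧ (↑T : Set V) ⊆ S ∧ T.Nonempty ∧
          T.card ≤ j + 1 := by
    intro j
    induction j with
    | zero => omega
    | succ j ih =>
      intro _ hjk
      by_cases hj0 : j = 0
      · subst hj0
        -- base case : one edge
        have hone : W.toFinset.Nonempty := by
          rw [← Finset.card_pos, hWF]; omega
        obtain ⟨e₀, he₀⟩ := hone
        obtain ⟨x, y, rfl⟩ := aux_sym2_decomp e₀
        have he₀' : s(x, y) ∈ W := Set.mem_toFinset.mp he₀
        refine ⟨{s(x, y)}, by simpa using he₀, by simp, {x, y}, ?_, ?_, ⟨x, by simp⟩, ?_⟩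
        · intro e he t ht
          rw [Finset.mem_singleton] at he; subst he
          rcases Sym2.mem_iff.mp ht with rfl | rfl <;> simp
        · intro t ht
          simp only [Finset.coe_insert, Finset.coe_singleton, Set.mem_insert_iff,
            Set.mem_singleton_iff] at ht
          rcases ht with rfl | rfl
          · exact he₀'.2 _ (Sym2.mem_mk_left _ _)
          · exact he₀'.2 _ (Sym2.mem_mk_right _ _)
        · exact le_trans (Finset.card_insert_le _ _) (by simp)
      · obtain ⟨E, hEW, hEcard, T, hET, hTS, hTne, hTcard⟩ :=
          ih (by omega) (by omega)
        -- find a new edge touching T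
        have hnew : ∃ e : Sym2 V, e ∈ W ∧ e ∉ E ∧ ∃ x ∈ e, x ∈ T := by
          have hnonfull : (W.toFinset \ E).Nonempty := by
            rw [← Finset.card_pos, Finset.card_sdiff_of_subset hEW, hWF]; omega
          obtain ⟨e', he'⟩ := hnonfull
          rw [Finset.mem_sdiff, Set.mem_toFinset] at he'
          obtain ⟨x', y', rfl⟩ := aux_sym2_decomp e'
          obtain ⟨u, huT⟩ := hTne
          have huS : u ∈ S := hTS huT
          have hxS : x' ∈ S := he'.1.2 _ (Sym2.mem_mk_left _ _)
          obtain ⟨w⟩ := hconn.preconnected ⟨u, huS⟩ ⟨x', hxS⟩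
          rcases aux_escape hET w huT with ⟨e, heG, heS, heE, ht, hte, htT⟩ | hbT
          · exact ⟨e, ⟨heG, heS⟩, heE, ht, hte, htT⟩
          · exact ⟨s(x', y'), he'.1, he'.2, x', Sym2.mem_mk_left _ _, hbT⟩
        obtain ⟨e, heW, heE, t, hte, htT⟩ := hnew
        obtain ⟨q, rfl⟩ := Sym2.mem_iff_exists.mp hte
        refine ⟨insert s(t, q) E, ?_, ?_, insert q T, ?_, ?_, ?_, ?_⟩
        · intro e' he'
          rcases Finset.mem_insert.mp he' with rfl | he'
          · exact Set.mem_toFinset.mpr heW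
          · exact hEW he'
        · rw [Finset.card_insert_of_notMem heE, hEcard]
        · intro e' he' x hx
          rcases Finset.mem_insert.mp he' with rfl | he'
          · rcases Sym2.mem_iff.mp hx with rfl | rfl
            · exact Finset.mem_insert_of_mem htT
            · exact Finset.mem_insert_self _ _
          · exact Finset.mem_insert_of_mem (hET _ he' _ hx)
        · intro x hx
          simp only [Finset.coe_insert, Set.mem_insert_iff] at hx
          rcases hx with rfl | hx
          · exact heW.2 _ (Sym2.mem_mk_right _ _)
          · exact hTS hx
        · exact hTne.mono (Finset.subset_insert _ _)
        · exact le_trans (Finset.card_insert_le _ _) (by omega)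
  obtain ⟨E, hEW, hEcard, T, hET, _, _, hTcard⟩ := key k hk le_rfl
  refine ⟨E, ?_, hEcard, T, hET, hTcard⟩
  intro e he
  exact (Set.mem_toFinset.mp (hEW he)).1

lemma aux_extract [Fintype V] {G : SimpleGraph V} {k : ℕ} (hk : 1 ≤ k)
    (hbad : ¬ TreeSizeLE G (k - 1)) :
    ∃ m s : ℕ, ((m = k ∧ s = k + 1) ∨ (1 ≤ m ∧ m ≤ k ∧ s = m)) ∧
      ∃ E : Finset (Sym2 V), (↑E : Set (Sym2 V)) ⊆ G.edgeSet ∧ E.card = m ∧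
        ∃ T : Finset V, (∀ e ∈ E, ∀ x ∈ e, x ∈ T) ∧ T.card ≤ s := by
  classical
  rw [TreeSizeLE, not_and_or] at hbad
  rcases hbad with hcyc | hS
  · rw [SimpleGraph.IsAcyclic] at hcyc
    push_neg at hcyc
    obtain ⟨v, c, hc⟩ := hcyc
    have h3 : 3 ≤ c.length := hc.three_le_length
    have hnodup : c.edges.Nodup := hc.isCircuit.isTrail.edges_nodup
    have hlen : c.edges.length = c.length := c.length_edges
    have hsupmem : ∀ e ∈ c.edges, ∀ x ∈ e, x ∈ c.support := by
      intro e he x hx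
      obtain ⟨p, q, rfl⟩ := aux_sym2_decomp e
      rcases Sym2.mem_iff.mp hx with rfl | rfl
      · exact c.fst_mem_support_of_mem_edges he
      · exact c.snd_mem_support_of_mem_edges he
    by_cases hlk : c.length ≤ k
    · refine ⟨c.length, c.length, Or.inr ⟨by omega, hlk, rfl⟩,
        c.edges.toFinset, ?_, ?_, c.support.tail.toFinset, ?_, ?_⟩
      · intro e he
        exact c.edges_subset_edgeSet (List.mem_toFinset.mp he)
      · rw [List.toFinset_card_of_nodup hnodup, hlen]
      · intro e he x hx
        rw [List.mem_toFinset]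
        have hx' := hsupmem e (List.mem_toFinset.mp he) x hx
        rw [c.support_eq_cons] at hx'
        rcases List.mem_cons.mp hx' with rfl | hx'
        · exact aux_cycle_mem_tail c (by omega)
        · exact hx'
      · calc c.support.tail.toFinset.card ≤ c.support.tail.length :=
              List.toFinset_card_le _
          _ = c.length := by
              have hlen2 := c.length_support
              rw [c.support_eq_cons, List.length_cons] at hlen2
              omega
    · refine ⟨k, k + 1, Or.inl ⟨rfl, rfl⟩, (c.edges.take k).toFinset, ?_, ?_,
        (c.support.take (k + 1)).toFinset, ?_, ?_⟩
      · intro e he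
        exact c.edges_subset_edgeSet (List.take_subset _ _ (List.mem_toFinset.mp he))
      · rw [List.toFinset_card_of_nodup (hnodup.sublist (List.take_sublist _ _)),
          List.length_take, hlen]
        omega
      · intro e he x hx
        rw [List.mem_toFinset]
        exact aux_walk_take c k e (List.mem_toFinset.mp he) x hx
      · calc ((c.support.take (k + 1)).toFinset).card ≤ (c.support.take (k + 1)).length :=
              List.toFinset_card_le _
          _ ≤ k + 1 := List.length_take_le _ _
  · push_neg at hS
    obtain ⟨S, hconn, hgt⟩ := hS
    obtain ⟨E, hE, hcard, T, hT⟩ := aux_greedy hconn hk (by omega)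
    exact ⟨k, k + 1, Or.inl ⟨rfl, rfl⟩, E, hE, hcard, T, hT⟩

end AuxGraph

section AuxCount

lemma aux_runPainter_mem {V : Type} {r : ℕ} (π : PainterStrategy V r) :
    ∀ (l : List (Sym2 V)) (h0 : EdgeHistory V r) (e : Sym2 V) (c : Fin r),
      (e, c) ∈ runPainterAux π h0 l → (e, c) ∈ h0 ∨ e ∈ l := by
  intro l
  induction l with
  | nil => intro h0 e c h; exact Or.inl (by simpa [runPainterAux] using h)
  | cons a l ih =>
    intro h0 e c h
    rw [runPainterAux] at h
    rcases ih _ e c h with h' | h'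
    · rcases List.mem_append.mp h' with h'' | h''
      · exact Or.inl h''
      · simp only [List.mem_singleton, Prod.mk.injEq] at h''
        exact Or.inr (by simp [h''.1])
    · exact Or.inr (List.mem_cons_of_mem _ h')

lemma aux_builder_zero {a' : Type} (F : SimpleGraph a') (hF : F.edgeSet.Nonempty) {r : ℕ}
    (hr : 1 ≤ r) : ¬ BuilderWinsTree F r 0 := by
  rintro ⟨a, hwin⟩
  obtain ⟨l, hvalid, htree, hmono⟩ := hwin fun _ _ => ⟨0, hr⟩
  obtain ⟨c, femb, hcopy⟩ := hmono
  obtain ⟨eF, heF⟩ := hF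
  obtain ⟨u, v, rfl⟩ := aux_sym2_decomp eF
  have hadjF : F.Adj u v := heF
  have hadj := hcopy u v hadjF
  rw [colorGraph, SimpleGraph.fromEdgeSet_adj] at hadj
  obtain ⟨hmem, hne⟩ := hadj
  have hel : s(femb u, femb v) ∈ l := by
    rcases aux_runPainter_mem _ l [] _ _ hmem with h | h
    · simp at h
    · exact h
  have htree' := (htree l.length).2
  rw [List.take_length] at htree'
  have hadjB : (boardOf l).Adj (femb u) (femb v) := by
    rw [boardOf, SimpleGraph.fromEdgeSet_adj]; exact ⟨hel, hne⟩
  let S : Set (Fin a) := {femb u, femb v}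
  have hmemS : ∀ x : ↑S, (x : Fin a) = femb u ∨ (x : Fin a) = femb v := by
    intro x
    rcases Set.mem_insert_iff.mp x.2 with hx | hx
    · exact Or.inl hx
    · exact Or.inr (Set.mem_singleton_iff.mp hx)
  have hadj2 : ∀ p q : ↑S, (p : Fin a) = femb u → (q : Fin a) = femb v →
      ((boardOf l).induce S).Adj p q := by
    intro p q hp hq
    have : (boardOf l).Adj ↑p ↑q := by rw [hp, hq]; exact hadjB
    exact this
  have hconn : ((boardOf l).induce S).Connected := by
    rw [SimpleGraph.connected_iff]
    constructor
    · intro x y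
      rcases hmemS x with hx | hx <;> rcases hmemS y with hy | hy
      · have : x = y := Subtype.ext (by rw [hx, hy])
        rw [this]
      · exact (hadj2 x y hx hy).reachable
      · exact ((hadj2 y x hy hx).symm).reachable
      · have : x = y := Subtype.ext (by rw [hx, hy])
        rw [this]
    · exact ⟨⟨femb u, by left; rfl⟩⟩
  have hwithin := htree' S hconn
  have hpos : 0 < edgesWithin (boardOf l) S := by
    rw [edgesWithin, Set.ncard_pos (Set.toFinite _)]
    refine ⟨s(femb u, femb v), ?_, ?_⟩
    · exact hadjB
    · intro t ht
      rcases Sym2.mem_iff.mp ht with rfl | rfl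
      · exact Set.mem_insert _ _
      · exact Set.mem_insert_of_mem _ rfl
  omega

lemma aux_valid_card (n N : ℕ) :
    ({f : Fin N → Sym2 (Fin n) | ValidSeqFun f}).ncard =
      (Fintype.card {e : Sym2 (Fin n) // ¬ e.IsDiag}).descFactorial N := by
  classical
  rw [← Nat.card_coe_set_eq]
  have hc : Nat.card (Fin N ↪ {e : Sym2 (Fin n) // ¬ e.IsDiag}) =
      (Fintype.card {e : Sym2 (Fin n) // ¬ e.IsDiag}).descFactorial N := by
    rw [Nat.card_eq_fintype_card, Fintype.card_embedding_eq, Fintype.card_fin]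
  rw [← hc]
  apply Nat.card_congr
  exact
    { toFun := fun f => ⟨fun i => ⟨f.1 i, f.2.2 i⟩, fun i j h => f.2.1 (congrArg Subtype.val h)⟩
      invFun := fun g => ⟨fun i => (g i).1,
        ⟨fun i j h => g.injective (Subtype.ext h), fun i => (g i).2⟩⟩
      left_inv := fun f => rfl
      right_inv := fun g => by ext i; rfl }

lemma aux_fiber_card {n N m : ℕ} (g : Fin m ↪ Fin N) (E : Fin m → Sym2 (Fin n)) :
    ({f : Fin N → Sym2 (Fin n) | ValidSeqFun f ∧ ∀ j, f (g j) = E j}).ncard ≤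
      (Fintype.card {e : Sym2 (Fin n) // ¬ e.IsDiag}).descFactorial (N - m) := by
  classical
  rw [← Nat.card_coe_set_eq]
  have hc : Nat.card (Fin (N - m) ↪ {e : Sym2 (Fin n) // ¬ e.IsDiag}) =
      (Fintype.card {e : Sym2 (Fin n) // ¬ e.IsDiag}).descFactorial (N - m) := by
    rw [Nat.card_eq_fintype_card, Fintype.card_embedding_eq, Fintype.card_fin]
  rw [← hc]
  set R : Finset (Fin N) := (Finset.univ.map g)ᶜ with hRdef
  have hRcard : Fintype.card ↥R = N - m := by
    rw [Fintype.card_coe, Finset.card_compl, Finset.card_map]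
    simp
  let ε : Fin (N - m) ≃ ↥R := (Fintype.equivFinOfCardEq hRcard).symm
  apply Nat.card_le_card_of_injective
    (f := fun f : ↥{f : Fin N → Sym2 (Fin n) | ValidSeqFun f ∧ ∀ j, f (g j) = E j} =>
      (⟨fun i => ⟨f.1 ((ε i : ↥R) : Fin N), f.2.1.2 _⟩, by
        intro i j h
        have h1 : f.1 ((ε i : ↥R) : Fin N) = f.1 ((ε j : ↥R) : Fin N) :=
          congrArg Subtype.val h
        have h2 : ((ε i : ↥R) : Fin N) = ((ε j : ↥R) : Fin N) := f.2.1.1 h1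
        exact ε.injective (Subtype.ext h2)⟩ :
        Fin (N - m) ↪ {e : Sym2 (Fin n) // ¬ e.IsDiag}))
  intro f f' h
  apply Subtype.ext
  funext x
  by_cases hx : x ∈ R
  · have h1 := congrArg (fun (e : Fin (N - m) ↪ {e : Sym2 (Fin n) // ¬ e.IsDiag}) =>
      (e (ε.symm ⟨x, hx⟩) : Sym2 (Fin n))) h
    have h2 : f.1 ((ε (ε.symm ⟨x, hx⟩) : ↥R) : Fin N) =
        f'.1 ((ε (ε.symm ⟨x, hx⟩) : ↥R) : Fin N) := h1
    simpa [Equiv.apply_symm_apply] using h2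
  · have hx' : x ∈ Finset.univ.map g := by
      by_contra hc'
      exact hx (Finset.mem_compl.mpr hc')
    obtain ⟨j, _, rfl⟩ := Finset.mem_map.mp hx'
    rw [f.2.2 j, f'.2.2 j]

def shapePair (k : ℕ) : Option (Fin k) → ℕ × ℕ
  | none => (k, k + 1)
  | some i => ((i : ℕ) + 1, (i : ℕ) + 1)

def EvSet (n N m s : ℕ) : Set (Fin N → Sym2 (Fin n)) :=
  {f | ValidSeqFun f ∧ ∃ g : Fin m ↪ Fin N, ∃ h : Fin s → Fin n, ∃ p : Fin m → Fin s × Fin s,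
      ∀ j, f (g j) = s(h (p j).1, h (p j).2)}

lemma aux_EvSet_card (n N m s : ℕ) :
    (EvSet n N m s).ncard ≤
      N.descFactorial m * (n ^ s * (s * s) ^ m) *
        (Fintype.card {e : Sym2 (Fin n) // ¬ e.IsDiag}).descFactorial (N - m) := by
  classical
  have hsub : EvSet n N m s ⊆
      ⋃ d : (Fin m ↪ Fin N) × (Fin s → Fin n) × (Fin m → Fin s × Fin s),
        {f : Fin N → Sym2 (Fin n) | ValidSeqFun f ∧
          ∀ j, f (d.1 j) = s(d.2.1 (d.2.2 j).1, d.2.1 (d.2.2 j).2)} := by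
    rintro f ⟨hval, g, h, p, hp⟩
    exact Set.mem_iUnion.mpr ⟨⟨g, h, p⟩, hval, hp⟩
  have hD : Fintype.card ((Fin m ↪ Fin N) × (Fin s → Fin n) × (Fin m → Fin s × Fin s)) =
      N.descFactorial m * (n ^ s * (s * s) ^ m) := by
    simp [Fintype.card_prod, Fintype.card_fun, Fintype.card_embedding_eq]
  calc (EvSet n N m s).ncard
      ≤ _ := Set.ncard_le_ncard hsub (Set.toFinite _)
    _ ≤ ∑ d : (Fin m ↪ Fin N) × (Fin s → Fin n) × (Fin m → Fin s × Fin s),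
        ({f : Fin N → Sym2 (Fin n) | ValidSeqFun f ∧
          ∀ j, f (d.1 j) = s(d.2.1 (d.2.2 j).1, d.2.1 (d.2.2 j).2)}).ncard :=
        aux_ncard_iUnion_le _
    _ ≤ ∑ _d : (Fin m ↪ Fin N) × (Fin s → Fin n) × (Fin m → Fin s × Fin s),
        (Fintype.card {e : Sym2 (Fin n) // ¬ e.IsDiag}).descFactorial (N - m) :=
        Finset.sum_le_sum (fun d _ => aux_fiber_card d.1 _)
    _ = _ := by rw [Finset.sum_const, Finset.card_univ, hD, smul_eq_mul]

end AuxCount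

section AuxMem

lemma aux_bad_mem {α : Type} [Fintype α] (F : SimpleGraph α) {r k n N : ℕ} (hk : 1 ≤ k)
    (π : PainterStrategy (Fin n) r) (hπ : PainterAvoidsTree F r (k - 1) n π)
    {f : Fin N → Sym2 (Fin n)} (hf : ValidSeqFun f) (hmono : OnlineMonoCopy F π f) :
    ∃ o : Option (Fin k), f ∈ EvSet n N (shapePair k o).1 (shapePair k o).2 := by
  classical
  have hvalid : ValidEdgeSeq (List.ofFn f) := by
    constructor
    · exact List.nodup_ofFn.mpr hf.1
    · intro e he
      rw [List.mem_ofFn] at he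
      obtain ⟨i, rfl⟩ := he
      exact hf.2 i
  have hnt : ¬ ∀ i, TreeSizeLE (boardOf ((List.ofFn f).take i)) (k - 1) := fun h =>
    hπ _ hvalid h hmono
  push_neg at hnt
  obtain ⟨i, hbad⟩ := hnt
  obtain ⟨m, s, hshape, E, hEsub, hEcard, T, hTcov, hTcard⟩ := aux_extract hk hbad
  have hEmem : ∀ e ∈ E, ∃ idx : Fin N, f idx = e := by
    intro e he
    have h1 := hEsub he
    rw [boardOf, SimpleGraph.edgeSet_fromEdgeSet] at h1
    have h2 : e ∈ List.ofFn f := List.take_subset _ _ h1.1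
    rwa [List.mem_ofFn] at h2
  have hm1 : 1 ≤ m := by
    rcases hshape with ⟨rfl, _⟩ | ⟨h, _, _⟩
    · omega
    · exact h
  have hEne : E.Nonempty := Finset.card_pos.mp (by omega)
  obtain ⟨e₀, he₀⟩ := hEne
  obtain ⟨v₀, w₀, he₀xy⟩ := aux_sym2_decomp e₀
  let ε : Fin m ≃ {x // x ∈ E} :=
    (Fintype.equivFinOfCardEq (by rw [Fintype.card_coe, hEcard])).symm
  choose idx hidx using hEmem
  let hfun : Fin s → Fin n := fun i =>
    if h : (i : ℕ) < T.toList.length then T.toList.get ⟨i, h⟩ else v₀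
  have hsurj : ∀ x ∈ T, ∃ i : Fin s, hfun i = x := by
    intro x hx
    have hx' : x ∈ T.toList := Finset.mem_toList.mpr hx
    obtain ⟨j, hj, hjx⟩ := List.getElem_of_mem hx'
    have hjs : j < s := by
      have := T.length_toList
      omega
    refine ⟨⟨j, hjs⟩, ?_⟩
    simp only [hfun]
    rw [dif_pos hj]
    simpa using hjx
  have hpair : ∀ j : Fin m, ∃ pq : Fin s × Fin s,
      ((ε j : {x // x ∈ E}) : Sym2 (Fin n)) = s(hfun pq.1, hfun pq.2) := by
    intro j
    obtain ⟨x, y, hxy⟩ := aux_sym2_decomp ((ε j : {x // x ∈ E}) : Sym2 (Fin n))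
    have hx : x ∈ T := hTcov _ (ε j).2 _ (by rw [hxy]; exact Sym2.mem_mk_left x y)
    have hy : y ∈ T := hTcov _ (ε j).2 _ (by rw [hxy]; exact Sym2.mem_mk_right x y)
    obtain ⟨i1, hi1⟩ := hsurj x hx
    obtain ⟨i2, hi2⟩ := hsurj y hy
    exact ⟨(i1, i2), by rw [hxy, hi1, hi2]⟩
  choose p hp using hpair
  have hEv : f ∈ EvSet n N m s := by
    refine ⟨hf, ⟨fun j => idx _ (ε j).2, ?_⟩, hfun, p, fun j => ?_⟩
    · intro j1 j2 h12
      have hval : ((ε j1 : {x // x ∈ E}) : Sym2 (Fin n)) = (ε j2 : {x // x ∈ E}) := by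
        rw [← hidx _ (ε j1).2, ← hidx _ (ε j2).2]
        exact congrArg f h12
      exact ε.injective (Subtype.ext hval)
    · show f (idx _ (ε j).2) = _
      rw [hidx _ (ε j).2]
      exact hp j
  rcases hshape with ⟨hmk, hsk⟩ | ⟨h1, h2, h3⟩
  · subst hmk
    subst hsk
    exact ⟨none, hEv⟩
  · have hms : shapePair k (some ⟨m - 1, by omega⟩) = (m, s) := by
      simp only [shapePair, Fin.val_mk, Prod.mk.injEq]
      omega
    refine ⟨some ⟨m - 1, by omega⟩, ?_⟩
    rw [hms]
    exact hEv

lemma aux_prob_bound {α : Type} [Fintype α] (F : SimpleGraph α) {r k n N : ℕ} (hk : 1 ≤ k)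
    (π : PainterStrategy (Fin n) r) (hπ : PainterAvoidsTree F r (k - 1) n π)
    (hNM : N < Fintype.card {e : Sym2 (Fin n) // ¬ e.IsDiag}) :
    onlineProb n N (OnlineMonoCopy F π) ≤
      ∑ o : Option (Fin k),
        ((N : ℝ) ^ (shapePair k o).1 * ((n : ℝ) ^ (shapePair k o).2 *
          (((shapePair k o).2 * (shapePair k o).2 : ℕ) : ℝ) ^ (shapePair k o).1)) /
        ((Fintype.card {e : Sym2 (Fin n) // ¬ e.IsDiag} - N : ℕ) : ℝ) ^ (shapePair k o).1 := by
  classical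
  set M := Fintype.card {e : Sym2 (Fin n) // ¬ e.IsDiag} with hM
  rw [onlineProb, aux_valid_card]
  have hBpos : (0 : ℝ) < (M.descFactorial N : ℝ) := by
    have : M.descFactorial N ≠ 0 := by
      rw [Ne, Nat.descFactorial_eq_zero_iff_lt]
      omega
    positivity
  have hsub : {f : Fin N → Sym2 (Fin n) | ValidSeqFun f ∧ OnlineMonoCopy F π f} ⊆
      ⋃ o : Option (Fin k), EvSet n N (shapePair k o).1 (shapePair k o).2 := by
    rintro f ⟨hval, hmono⟩
    obtain ⟨o, ho⟩ := aux_bad_mem F hk π hπ hval hmono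
    exact Set.mem_iUnion.mpr ⟨o, ho⟩
  have hnum : ({f : Fin N → Sym2 (Fin n) | ValidSeqFun f ∧ OnlineMonoCopy F π f}).ncard ≤
      ∑ o : Option (Fin k), (EvSet n N (shapePair k o).1 (shapePair k o).2).ncard :=
    le_trans (Set.ncard_le_ncard hsub (Set.toFinite _)) (aux_ncard_iUnion_le _)
  have hterm : ∀ o : Option (Fin k),
      ((EvSet n N (shapePair k o).1 (shapePair k o).2).ncard : ℝ) / (M.descFactorial N : ℝ) ≤
        ((N : ℝ) ^ (shapePair k o).1 * ((n : ℝ) ^ (shapePair k o).2 *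
          (((shapePair k o).2 * (shapePair k o).2 : ℕ) : ℝ) ^ (shapePair k o).1)) /
        ((M - N : ℕ) : ℝ) ^ (shapePair k o).1 := by
    intro o
    set m := (shapePair k o).1 with hm
    set s := (shapePair k o).2 with hs
    have hDpos : (0 : ℝ) < ((M - N : ℕ) : ℝ) ^ m := by
      have : 0 < M - N := by omega
      positivity
    by_cases hmN : m ≤ N
    · have hnat : (EvSet n N m s).ncard * (M - N) ^ m ≤
          (N ^ m * (n ^ s * (s * s) ^ m)) * M.descFactorial N := by
        calc (EvSet n N m s).ncard * (M - N) ^ m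
            ≤ (N.descFactorial m * (n ^ s * (s * s) ^ m) * M.descFactorial (N - m)) *
                (M - N) ^ m :=
              Nat.mul_le_mul_right _ (aux_EvSet_card n N m s)
          _ ≤ (N ^ m * (n ^ s * (s * s) ^ m) * M.descFactorial (N - m)) *
                (M - (N - m)).descFactorial m := by
              apply Nat.mul_le_mul
              · apply Nat.mul_le_mul_right
                apply Nat.mul_le_mul_right
                exact Nat.descFactorial_le_pow _ _
              · exact aux_desc_lower hmN (le_of_lt hNM)
          _ = (N ^ m * (n ^ s * (s * s) ^ m)) * M.descFactorial N := by
              rw [aux_desc_split (M := M) hmN]; ring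
      rw [div_le_div_iff₀ hBpos hDpos]
      calc ((EvSet n N m s).ncard : ℝ) * ((M - N : ℕ) : ℝ) ^ m
          = (((EvSet n N m s).ncard * (M - N) ^ m : ℕ) : ℝ) := by push_cast; ring
        _ ≤ (((N ^ m * (n ^ s * (s * s) ^ m)) * M.descFactorial N : ℕ) : ℝ) :=
            Nat.cast_le.mpr hnat
        _ = ((N : ℝ) ^ m * ((n : ℝ) ^ s * (((s * s : ℕ) : ℝ)) ^ m)) *
            (M.descFactorial N : ℝ) := by push_cast; ring
    · have hempty : EvSet n N m s = ∅ := by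
        ext f
        simp only [EvSet, Set.mem_setOf_eq, Set.mem_empty_iff_false, iff_false, not_and]
        rintro _ ⟨g, -⟩
        exact absurd (by simpa using Fintype.card_le_of_embedding g) hmN
      rw [hempty]
      simp only [Set.ncard_empty, Nat.cast_zero, zero_div]
      positivity
  calc ({f : Fin N → Sym2 (Fin n) | ValidSeqFun f ∧ OnlineMonoCopy F π f}).ncard /
        (M.descFactorial N : ℝ)
      ≤ (∑ o : Option (Fin k),
          ((EvSet n N (shapePair k o).1 (shapePair k o).2).ncard : ℝ)) /
          (M.descFactorial N : ℝ) := by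
        refine (div_le_div_iff_of_pos_right hBpos).mpr ?_
        exact_mod_cast hnum
    _ = ∑ o : Option (Fin k),
          ((EvSet n N (shapePair k o).1 (shapePair k o).2).ncard : ℝ) /
          (M.descFactorial N : ℝ) := by rw [Finset.sum_div]
    _ ≤ _ := Finset.sum_le_sum fun o _ => hterm o

end AuxMem

section AuxMain

lemma aux_main {α : Type} [Fintype α] (F : SimpleGraph α) {r k : ℕ} (hk : 1 ≤ k)
    (π : (n : ℕ) → PainterStrategy (Fin n) r)
    (hπ : ∀ n, PainterAvoidsTree F r (k - 1) n (π n))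
    (N : ℕ → ℕ)
    (hN : (fun n : ℕ => (N n : ℝ)) =o[atTop] fun n : ℕ => (n : ℝ) ^ ((1 : ℝ) - 1 / (k : ℝ))) :
    Tendsto (fun n : ℕ => onlineProb n (N n) (OnlineMonoCopy F (π n))) atTop (nhds 0) := by
  classical
  set φ : ℕ → ℝ := fun n => (n : ℝ) ^ ((1 : ℝ) - 1 / (k : ℝ)) with hφ
  have hkR : (1 : ℝ) ≤ (k : ℝ) := by exact_mod_cast hk
  have hexp0 : (0 : ℝ) ≤ 1 - 1 / (k : ℝ) := by
    have h1 : 1 / (k : ℝ) ≤ 1 := by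
      rw [div_le_one (by linarith)]
      exact hkR
    linarith
  have hexp1 : (1 : ℝ) - 1 / (k : ℝ) ≤ 1 := by
    have : (0 : ℝ) ≤ 1 / (k : ℝ) := by positivity
    linarith
  have hdiv : Tendsto (fun n : ℕ => (N n : ℝ) / φ n) atTop (nhds 0) :=
    hN.tendsto_div_nhds_zero
  have hφpos : ∀ n : ℕ, 1 ≤ n → (0 : ℝ) < φ n := by
    intro n hn
    exact Real.rpow_pos_of_pos (by exact_mod_cast hn) _
  have hφle : ∀ n : ℕ, 1 ≤ n → φ n ≤ (n : ℝ) := by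
    intro n hn
    have h1 : (1 : ℝ) ≤ (n : ℝ) := by exact_mod_cast hn
    calc φ n ≤ (n : ℝ) ^ (1 : ℝ) := Real.rpow_le_rpow_of_exponent_le h1 hexp1
      _ = (n : ℝ) := Real.rpow_one _
  have hNle : ∀ᶠ n : ℕ in atTop, (N n : ℝ) ≤ (n : ℝ) := by
    filter_upwards [hdiv.eventually_lt_const one_pos, eventually_ge_atTop 1] with n h1 h2
    have h3 := (div_lt_one (hφpos n h2)).mp h1
    linarith [hφle n h2]
  have hNn : Tendsto (fun n : ℕ => (N n : ℝ) / (n : ℝ)) atTop (nhds 0) := by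
    apply squeeze_zero' (g := fun n : ℕ => (N n : ℝ) / φ n)
    · exact Eventually.of_forall fun n => by positivity
    · filter_upwards [eventually_ge_atTop 1] with n hn
      exact div_le_div_of_nonneg_left (by positivity) (hφpos n hn) (hφle n hn)
    · exact hdiv
  set M : ℕ → ℕ := fun n => Fintype.card {e : Sym2 (Fin n) // ¬ e.IsDiag} with hMdef
  have hMval : ∀ n : ℕ, ((M n : ℕ) : ℝ) = (n : ℝ) * ((n : ℝ) - 1) / 2 := by
    intro n
    rw [hMdef]
    simp only [Sym2.card_subtype_not_diag, Fintype.card_fin]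
    rw [Nat.cast_choose_two]
  have hMN : ∀ᶠ n : ℕ in atTop,
      N n < M n ∧ (n : ℝ) ^ 2 / 4 ≤ ((M n - N n : ℕ) : ℝ) := by
    filter_upwards [hNle, eventually_ge_atTop 6] with n h1 h2
    have hn6 : (6 : ℝ) ≤ (n : ℝ) := by exact_mod_cast h2
    have hNM : N n < M n := by
      have : (N n : ℝ) < ((M n : ℕ) : ℝ) := by rw [hMval n]; nlinarith
      exact_mod_cast this
    refine ⟨hNM, ?_⟩
    rw [Nat.cast_sub (le_of_lt hNM), hMval n]
    nlinarith
  -- the final bounding function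
  set G : Option (Fin k) → ℕ → ℝ := fun o n =>
    ((N n : ℝ) ^ (shapePair k o).1 * ((n : ℝ) ^ (shapePair k o).2 *
      (((shapePair k o).2 * (shapePair k o).2 : ℕ) : ℝ) ^ (shapePair k o).1)) /
    ((n : ℝ) ^ 2 / 4) ^ (shapePair k o).1 with hG
  have hstep : ∀ᶠ n : ℕ in atTop,
      onlineProb n (N n) (OnlineMonoCopy F (π n)) ≤ ∑ o : Option (Fin k), G o n := by
    filter_upwards [hMN, eventually_ge_atTop 1] with n hM1 hn1
    refine le_trans (aux_prob_bound F hk (π n) (hπ n) hM1.1) (Finset.sum_le_sum fun o _ => ?_)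
    have hnum : (0 : ℝ) ≤ (N n : ℝ) ^ (shapePair k o).1 * ((n : ℝ) ^ (shapePair k o).2 *
        (((shapePair k o).2 * (shapePair k o).2 : ℕ) : ℝ) ^ (shapePair k o).1) := by positivity
    have hden : (0 : ℝ) < ((n : ℝ) ^ 2 / 4) ^ (shapePair k o).1 := by
      have : (0 : ℝ) < (n : ℝ) := by exact_mod_cast hn1
      positivity
    apply div_le_div_of_nonneg_left hnum hden
    exact pow_le_pow_left₀ (by positivity) hM1.2 _
  have hGlim : ∀ o : Option (Fin k), Tendsto (G o) atTop (nhds 0) := by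
    intro o
    match o with
    | none =>
      set c : ℝ := (((k + 1) * (k + 1) : ℕ) : ℝ) with hc
      have hceq : G none =ᶠ[atTop] fun n => (4 * c) ^ k * ((N n : ℝ) / φ n) ^ k := by
        filter_upwards [eventually_ge_atTop 1] with n hn
        have hnpos : (0 : ℝ) < (n : ℝ) := by exact_mod_cast hn
        have hφk : (φ n) ^ k = (n : ℝ) ^ (k - 1 : ℕ) := by
          rw [hφ]
          rw [← Real.rpow_natCast ((n : ℝ) ^ ((1 : ℝ) - 1 / (k : ℝ))) k,
            ← Real.rpow_natCast (n : ℝ) (k - 1), ← Real.rpow_mul (le_of_lt hnpos)]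
          congr 1
          have hkne : (k : ℝ) ≠ 0 := by linarith
          have hcast : ((k - 1 : ℕ) : ℝ) = (k : ℝ) - 1 := by
            push_cast [Nat.cast_sub hk]
            ring
          rw [hcast]
          field_simp
        have h2k : (n : ℝ) ^ (2 * k) = (n : ℝ) ^ (k + 1) * (n : ℝ) ^ (k - 1 : ℕ) := by
          rw [← pow_add]
          congr 1
          omega
        show ((N n : ℝ) ^ k * ((n : ℝ) ^ (k + 1) * c ^ k)) / ((n : ℝ) ^ 2 / 4) ^ k
            = (4 * c) ^ k * ((N n : ℝ) / φ n) ^ k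
        rw [div_pow, div_pow, ← pow_mul, hφk, h2k]
        have hd1 : (n : ℝ) ^ (k + 1) ≠ 0 := by positivity
        have hd2 : (n : ℝ) ^ (k - 1 : ℕ) ≠ 0 := by positivity
        field_simp
        ring
      have hlim : Tendsto (fun n : ℕ => (4 * c) ^ k * ((N n : ℝ) / φ n) ^ k) atTop (nhds 0) := by
        have h1 : Tendsto (fun n : ℕ => ((N n : ℝ) / φ n) ^ k) atTop (nhds 0) := by
          have := hdiv.pow k
          rwa [zero_pow (by omega : k ≠ 0)] at this
        have := h1.const_mul ((4 * c) ^ k)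
        simpa using this
      exact hlim.congr' hceq.symm
    | some i =>
      set m : ℕ := (i : ℕ) + 1 with hm
      set c : ℝ := ((m * m : ℕ) : ℝ) with hc
      have hceq : G (some i) =ᶠ[atTop] fun n => (4 * c) ^ m * ((N n : ℝ) / (n : ℝ)) ^ m := by
        filter_upwards [eventually_ge_atTop 1] with n hn
        have hnpos : (0 : ℝ) < (n : ℝ) := by exact_mod_cast hn
        show ((N n : ℝ) ^ m * ((n : ℝ) ^ m * c ^ m)) / ((n : ℝ) ^ 2 / 4) ^ m
            = (4 * c) ^ m * ((N n : ℝ) / (n : ℝ)) ^ m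
        rw [div_pow, div_pow, ← pow_mul]
        have hd1 : (n : ℝ) ^ m ≠ 0 := by positivity
        have hd2 : (n : ℝ) ^ (2 * m) ≠ 0 := by positivity
        field_simp
        ring
      have hlim : Tendsto (fun n : ℕ => (4 * c) ^ m * ((N n : ℝ) / (n : ℝ)) ^ m) atTop
          (nhds 0) := by
        have h1 : Tendsto (fun n : ℕ => ((N n : ℝ) / (n : ℝ)) ^ m) atTop (nhds 0) := by
          have := hNn.pow m
          rwa [zero_pow (by omega : m ≠ 0)] at this
        have := h1.const_mul ((4 * c) ^ m)
        simpa using this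
      exact hlim.congr' hceq.symm
  have hsum : Tendsto (fun n : ℕ => ∑ o : Option (Fin k), G o n) atTop (nhds 0) := by
    have := tendsto_finset_sum (Finset.univ : Finset (Option (Fin k)))
      (fun o _ => hGlim o)
    simpa using this
  apply squeeze_zero' ?_ hstep hsum
  exact Eventually.of_forall fun n => by
    rw [onlineProb]
    positivity

end AuxMain


/-- lower bound part of Theorem 6. Let `F` be a forest with at least one
edge, `r ≥ 2`, and let `k` be the smallest integer for which Builder wins the deterministic
`F`-avoidance game with `r` colors and tree size restriction `k`. Then there is a sequence of
online Painter strategies that a.a.s. avoids a monochromatic copy of `F` for `N(n) = o(n^(1-1/k))`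
steps; in particular, any winning strategy for Painter in the deterministic game with tree size
restriction `k-1`, used online, has this property. -/
theorem statement2 {α : Type} [Fintype α] (F : SimpleGraph α) (hforest : F.IsAcyclic)
    (hF : F.edgeSet.Nonempty) (r : ℕ) (hr : 2 ≤ r)
    (k : ℕ) (hk : BuilderWinsTree F r k) (hkmin : ∀ j : ℕ, j < k → ¬ BuilderWinsTree F r j) :
    (∃ π : (n : ℕ) → PainterStrategy (Fin n) r,
      ∀ N : ℕ → ℕ,
        (fun n : ℕ => (N n : ℝ)) =o[atTop] (fun n : ℕ => (n : ℝ) ^ ((1 : ℝ) - 1 / (k : ℝ))) →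
        Tendsto (fun n : ℕ => onlineProb n (N n) (OnlineMonoCopy F (π n)))
          atTop (nhds 0)) ∧
    (∀ π : (n : ℕ) → PainterStrategy (Fin n) r,
      (∀ n : ℕ, PainterAvoidsTree F r (k - 1) n (π n)) →
      ∀ N : ℕ → ℕ,
        (fun n : ℕ => (N n : ℝ)) =o[atTop] (fun n : ℕ => (n : ℝ) ^ ((1 : ℝ) - 1 / (k : ℝ))) →
        Tendsto (fun n : ℕ => onlineProb n (N n) (OnlineMonoCopy F (π n)))
          atTop (nhds 0)) := by
  have hr1 : 1 ≤ r := by omega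
  have hk1 : 1 ≤ k := by
    by_contra h
    have hk0 : k = 0 := by omega
    exact aux_builder_zero F hF hr1 (hk0 ▸ hk)
  constructor
  · have hnb : ¬ BuilderWinsTree F r (k - 1) := hkmin _ (by omega)
    rw [BuilderWinsTree] at hnb
    push_neg at hnb
    choose πf hπf using hnb
    refine ⟨πf, fun Nf hN => aux_main F hk1 πf ?_ Nf hN⟩
    intro n l hval htree hmono
    exact (hπf n l) hval htree hmono
  · intro π hπ Nf hN
    exact aux_main F hk1 π hπ Nf hN
end

section
/- Let S_ℓ denote the star with ℓ edges, and let ℓ ≥ 1 and r ≥ 2 be integers. Then k*(S_ℓ,r) = r(ℓ−1)+1; that is, Builder has a winning strategy in the deterministic S_ℓ-avoidance game with r colors and tree size restriction r(ℓ−1)+1, and Painter has a winning strategy in the deterministic S_ℓ-avoidance game with r colors and tree size restriction r(ℓ−1). -/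
open SimpleGraph Filter Asymptotics
open scoped Classical

lemma star_isAcyclic {V : Type} {z : V} {G : SimpleGraph V}
    (hstar : ∀ u v, G.Adj u v → u = z ∨ v = z) : G.IsAcyclic := by
  intro v c hc
  have hz : z ∈ c.support := by
    cases c with
    | nil => exact absurd rfl hc.ne_nil
    | cons h p =>
      rcases hstar _ _ h with h1 | h2
      · rw [← h1]; exact SimpleGraph.Walk.start_mem_support _
      · rw [← h2]; exact List.mem_cons_of_mem _ (SimpleGraph.Walk.start_mem_support _)
  have hc' := hc.rotate hz
  set c' := c.rotate z hz with hc'def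
  clear_value c'
  clear hc hz hc'def c
  cases c' with
  | nil => exact absurd rfl hc'.ne_nil
  | cons h p =>
    cases p with
    | nil => exact G.irrefl h
    | cons h2 q =>
      have hnd : (Walk.cons h (Walk.cons h2 q)).support.tail.Nodup := hc'.2
      rw [Walk.support_cons, List.tail_cons, Walk.support_cons] at hnd
      rcases hstar _ _ h2 with rfl | rfl
      · exact (List.nodup_cons.mp hnd).1 q.end_mem_support
      · cases q with
        | nil =>
          have := hc'.three_le_length
          simp at this
        | cons h3 q' =>
          have hq := (List.nodup_cons.mp hnd).2
          rw [Walk.support_cons] at hq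
          exact (List.nodup_cons.mp hq).1 q'.end_mem_support

lemma runPainterAux_append {V : Type} {r : ℕ} (π : PainterStrategy V r)
    (h : EdgeHistory V r) (l₁ l₂ : List (Sym2 V)) :
    runPainterAux π h (l₁ ++ l₂) = runPainterAux π (runPainterAux π h l₁) l₂ := by
  induction l₁ generalizing h with
  | nil => simp [runPainterAux]
  | cons e es ih => simp [runPainterAux, ih]

lemma runPainterAux_map_fst {V : Type} {r : ℕ} (π : PainterStrategy V r)
    (h : EdgeHistory V r) (l : List (Sym2 V)) :
    (runPainterAux π h l).map Prod.fst = h.map Prod.fst ++ l := by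
  induction l generalizing h with
  | nil => simp [runPainterAux]
  | cons e es ih => simp [runPainterAux, ih]

lemma runPainter_map_fst {V : Type} {r : ℕ} (π : PainterStrategy V r) (l : List (Sym2 V)) :
    (runPainter π l).map Prod.fst = l := by
  simp [runPainter, runPainterAux_map_fst]

lemma runPainter_snoc {V : Type} {r : ℕ} (π : PainterStrategy V r) (l : List (Sym2 V))
    (e : Sym2 V) :
    runPainter π (l ++ [e]) = runPainter π l ++ [(e, π (runPainter π l) e)] := by
  simp [runPainter, runPainterAux_append, runPainterAux]

/-- number of edges of color `c` in history `h` containing `u` -/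

noncomputable def degC {V : Type} {r : ℕ} (h : EdgeHistory V r) (c : Fin r) (u : V) : ℕ :=
  Set.ncard {e : Sym2 V | (e, c) ∈ h ∧ u ∈ e}

noncomputable def degL {V : Type} (L : List (Sym2 V)) (u : V) : ℕ :=
  Set.ncard {e : Sym2 V | e ∈ L ∧ u ∈ e}

lemma degC_nil {V : Type} {r : ℕ} (c : Fin r) (u : V) : degC ([] : EdgeHistory V r) c u = 0 := by
  simp [degC]

lemma degC_snoc_ne {V : Type} {r : ℕ} (h : EdgeHistory V r) (e : Sym2 V) (c' c : Fin r) (u : V)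
    (hne : ¬(c = c' ∧ u ∈ e)) : degC (h ++ [(e, c')]) c u = degC h c u := by
  unfold degC
  congr 1
  ext e'
  simp only [Set.mem_setOf_eq, List.mem_append, List.mem_singleton, Prod.mk.injEq]
  constructor
  · rintro ⟨h1 | ⟨rfl, rfl⟩, h2⟩
    · exact ⟨h1, h2⟩
    · exact absurd ⟨rfl, h2⟩ hne
  · rintro ⟨h1, h2⟩; exact ⟨Or.inl h1, h2⟩

lemma degC_snoc_le {a r : ℕ} (h : EdgeHistory (Fin a) r) (e : Sym2 (Fin a)) (c' c : Fin r)
    (u : Fin a) : degC (h ++ [(e, c')]) c u ≤ degC h c u + 1 := by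
  unfold degC
  have hsub : {e' : Sym2 (Fin a) | (e', c) ∈ h ++ [(e, c')] ∧ u ∈ e'} ⊆
      insert e {e' : Sym2 (Fin a) | (e', c) ∈ h ∧ u ∈ e'} := by
    rintro e' ⟨h1, h2⟩
    rcases List.mem_append.mp h1 with h1 | h1
    · exact Or.inr ⟨h1, h2⟩
    · simp only [List.mem_singleton, Prod.mk.injEq] at h1
      exact Or.inl h1.1
  calc Set.ncard {e' : Sym2 (Fin a) | (e', c) ∈ h ++ [(e, c')] ∧ u ∈ e'}
      ≤ (insert e {e' : Sym2 (Fin a) | (e', c) ∈ h ∧ u ∈ e'}).ncard :=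
        Set.ncard_le_ncard hsub (Set.toFinite _)
    _ ≤ _ := Set.ncard_insert_le _ _

lemma fst_eq_unique {α β : Type*} {h : List (α × β)} (hn : (h.map Prod.fst).Nodup)
    {e : α} {c c' : β} (h1 : (e, c) ∈ h) (h2 : (e, c') ∈ h) : c = c' := by
  induction h with
  | nil => simp at h1
  | cons p t ih =>
    rw [List.map_cons, List.nodup_cons] at hn
    rcases List.mem_cons.mp h1 with rfl | h1' <;> rcases List.mem_cons.mp h2 with h2' | h2'
    · exact (Prod.mk.injEq .. ▸ h2'.symm).2.symm ▸ rfl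
    · exact absurd (List.mem_map.mpr ⟨(e, c'), h2', rfl⟩) hn.1
    · rw [← h2'] at hn
      exact absurd (List.mem_map.mpr ⟨(e, c), h1', rfl⟩) hn.1
    · exact ih hn.2 h1' h2'

lemma sum_degC {a r : ℕ} (h : EdgeHistory (Fin a) r) (hn : (h.map Prod.fst).Nodup) (u : Fin a) :
    ∑ c : Fin r, degC h c u = degL (h.map Prod.fst) u := by
  have key : ∀ c, degC h c u =
      (Finset.univ.filter (fun e : Sym2 (Fin a) => (e, c) ∈ h ∧ u ∈ e)).card := by
    intro c
    rw [degC, ← Set.ncard_coe_finset]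
    congr 1
    ext e
    simp
  have keyL : degL (h.map Prod.fst) u =
      (Finset.univ.filter (fun e : Sym2 (Fin a) => e ∈ h.map Prod.fst ∧ u ∈ e)).card := by
    rw [degL, ← Set.ncard_coe_finset]
    congr 1
    ext e
    simp
  rw [keyL]
  simp_rw [key]
  rw [← Finset.card_biUnion]
  · congr 1
    ext e
    simp only [Finset.mem_biUnion, Finset.mem_univ, true_and, Finset.mem_filter, List.mem_map]
    constructor
    · rintro ⟨c, hc, hu⟩
      exact ⟨⟨(e, c), hc, rfl⟩, hu⟩
    · rintro ⟨⟨⟨e', c⟩, hc, rfl⟩, hu⟩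
      exact ⟨c, hc, hu⟩
  · intro x _ y _ hxy
    simp only [Finset.disjoint_left, Finset.mem_filter]
    rintro e ⟨_, he1, he2⟩ ⟨_, he3, _⟩
    exact hxy (fst_eq_unique hn he1 he3)

lemma induce_supp_connected' {V : Type} (G : SimpleGraph V) (u : V) :
    (G.induce (G.connectedComponentMk u).supp).Connected := by
  apply G.induce_connected_of_patches u (by rw [ConnectedComponent.mem_supp_iff])
  intro v hv
  rw [ConnectedComponent.mem_supp_iff, ConnectedComponent.eq] at hv
  obtain ⟨p⟩ := hv.symm
  refine ⟨{x | x ∈ p.support}, ?_, p.start_mem_support, p.end_mem_support,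
    (p.connected_induce_support).preconnected _ _⟩
  intro x hx
  rw [ConnectedComponent.mem_supp_iff]
  exact ConnectedComponent.sound ⟨(p.takeUntil x hx).reverse⟩

lemma exists_good_color {a ℓ r : ℕ}
    (L : List (Sym2 (Fin a))) (e : Sym2 (Fin a)) (he : ¬ e.IsDiag)
    (hLd : (L ++ [e]).Nodup) (hLdiag : ∀ e' ∈ L, ¬e'.IsDiag)
    (hTS : TreeSizeLE (boardOf (L ++ [e])) (r * (ℓ - 1)))
    (h : EdgeHistory (Fin a) r) (hfst : h.map Prod.fst = L) :
    ∃ c : Fin r, ∀ u ∈ e, degC h c u < ℓ - 1 := by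
  by_contra hno
  push_neg at hno
  induction e using Sym2.inductionOn with
  | hf x y =>
  have hxy : x ≠ y := by simpa [Sym2.mk_isDiag_iff] using he
  have heL : s(x, y) ∉ L := by
    have := List.disjoint_of_nodup_append hLd
    intro hmem
    exact this hmem (List.mem_singleton_self _)
  -- sum bound from badness
  have hsum : ∀ c : Fin r, ℓ - 1 ≤ degC h c x + degC h c y := by
    intro c
    obtain ⟨u, hu, hdu⟩ := hno c
    rcases Sym2.mem_iff.mp hu with rfl | rfl
    · omega
    · omega
  have hnodupL : L.Nodup := (List.nodup_append.mp hLd).1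
  have h1 : r * (ℓ - 1) ≤ degL L x + degL L y := by
    calc r * (ℓ - 1) = ∑ _c : Fin r, (ℓ - 1) := by simp [mul_comm]
    _ ≤ ∑ c : Fin r, (degC h c x + degC h c y) := Finset.sum_le_sum fun c _ => hsum c
    _ = (∑ c : Fin r, degC h c x) + ∑ c : Fin r, degC h c y := Finset.sum_add_distrib
    _ = degL L x + degL L y := by
        rw [sum_degC h (hfst ▸ hnodupL) x, sum_degC h (hfst ▸ hnodupL) y, hfst]
  -- the board
  set G := boardOf (L ++ [s(x, y)]) with hG
  have hadj : G.Adj x y := by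
    rw [hG, boardOf, fromEdgeSet_adj]
    exact ⟨by simp, hxy⟩
  set S := (G.connectedComponentMk x).supp with hS
  have hxS : x ∈ S := by rw [hS, ConnectedComponent.mem_supp_iff]
  have hyS : y ∈ S := by
    rw [hS, ConnectedComponent.mem_supp_iff]
    exact ConnectedComponent.sound hadj.symm.reachable
  have hbound := hTS.2 S (induce_supp_connected' G x)
  have hedge : ∀ e' ∈ L, e' ∈ G.edgeSet := by
    intro e' he'
    rw [hG, boardOf, edgeSet_fromEdgeSet]
    exact ⟨by simp [he'], hLdiag e' he'⟩
  have hSx : ∀ e' ∈ L, x ∈ e' → ∀ v ∈ e', v ∈ S := by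
    intro e' he' hx v hv
    by_cases hvx : v = x
    · exact hvx ▸ hxS
    · have : e' = s(x, v) := ((Sym2.mem_and_mem_iff (Ne.symm hvx)).mp ⟨hx, hv⟩)
      have hadj' : G.Adj x v := by rw [← SimpleGraph.mem_edgeSet, ← this]; exact hedge e' he'
      rw [hS, ConnectedComponent.mem_supp_iff]
      exact ConnectedComponent.sound hadj'.symm.reachable
  have hSy : ∀ e' ∈ L, y ∈ e' → ∀ v ∈ e', v ∈ S := by
    intro e' he' hy v hv
    by_cases hvy : v = y
    · exact hvy ▸ hyS
    · have : e' = s(y, v) := ((Sym2.mem_and_mem_iff (Ne.symm hvy)).mp ⟨hy, hv⟩)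
      have hadj' : G.Adj y v := by rw [← SimpleGraph.mem_edgeSet, ← this]; exact hedge e' he'
      rw [hS, ConnectedComponent.mem_supp_iff]
      exact ConnectedComponent.sound (hadj'.symm.reachable.trans hadj.symm.reachable)
  set Ex := {e' : Sym2 (Fin a) | e' ∈ L ∧ x ∈ e'} with hEx
  set Ey := {e' : Sym2 (Fin a) | e' ∈ L ∧ y ∈ e'} with hEy
  have hsub : insert s(x, y) (Ex ∪ Ey) ⊆ G.edgeSet ∩ {e | ∀ v ∈ e, v ∈ S} := by
    rintro e' (rfl | he' | he')
    · constructor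
      · rw [hG, boardOf, edgeSet_fromEdgeSet]
        exact ⟨by simp, by simpa [Sym2.mk_isDiag_iff] using hxy⟩
      · intro v hv
        rcases Sym2.mem_iff.mp hv with rfl | rfl
        · exact hxS
        · exact hyS
    · exact ⟨hedge e' he'.1, hSx e' he'.1 he'.2⟩
    · exact ⟨hedge e' he'.1, hSy e' he'.1 he'.2⟩
  have hdisj : Disjoint Ex Ey := by
    rw [Set.disjoint_left]
    rintro e' ⟨he'L, hx⟩ ⟨_, hy⟩
    exact heL (((Sym2.mem_and_mem_iff hxy).mp ⟨hx, hy⟩) ▸ he'L)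
  have hnotin : s(x, y) ∉ Ex ∪ Ey := by
    rintro (he' | he') <;> exact heL he'.1
  have hcard : Ex.ncard + Ey.ncard + 1 ≤ edgesWithin G S := by
    have h2 : (insert s(x, y) (Ex ∪ Ey)).ncard = Ex.ncard + Ey.ncard + 1 := by
      rw [Set.ncard_insert_of_notMem hnotin (Set.toFinite _),
        Set.ncard_union_eq hdisj (Set.toFinite _) (Set.toFinite _)]
    rw [← h2]
    exact Set.ncard_le_ncard hsub (Set.toFinite _)
  have hEqx : degL L x = Ex.ncard := rfl
  have hEqy : degL L y = Ey.ncard := rfl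
  omega

noncomputable def starPainter (ℓ : ℕ) {r a : ℕ} (hr : 0 < r) : PainterStrategy (Fin a) r :=
  fun h e => if hc : ∃ c : Fin r, ∀ u ∈ e, degC h c u < ℓ - 1 then hc.choose else ⟨0, hr⟩

lemma starPainter_invariant {a ℓ r : ℕ} (hr : 0 < r)
    (l : List (Sym2 (Fin a))) (hv : ValidEdgeSeq l)
    (hTS : ∀ i, TreeSizeLE (boardOf (l.take i)) (r * (ℓ - 1))) :
    ∀ i c u, degC (runPainter (starPainter ℓ hr) (l.take i)) c u ≤ ℓ - 1 := by
  intro i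
  induction i with
  | zero => intro c u; simp [runPainter, runPainterAux, degC_nil]
  | succ i ih =>
    by_cases hi : i < l.length
    · have htake : l.take (i + 1) = l.take i ++ [l[i]] := by
        rw [List.take_succ, List.getElem?_eq_getElem hi]
        rfl
      set L := l.take i with hL
      set h := runPainter (starPainter ℓ hr) L with hh
      have hfst : h.map Prod.fst = L := runPainter_map_fst _ _
      have hex : ∃ c : Fin r, ∀ u ∈ l[i], degC h c u < ℓ - 1 := by
        apply exists_good_color L l[i]
        · exact hv.2 _ (l.getElem_mem hi)
        · rw [← htake]; exact (List.take_sublist _ _).nodup hv.1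
        · intro e' he'
          exact hv.2 e' ((List.take_sublist i l).subset he')
        · rw [← htake]; exact hTS (i + 1)
        · exact hfst
      intro c u
      rw [htake, runPainter_snoc, ← hh]
      by_cases hcu : c = starPainter ℓ hr h l[i] ∧ u ∈ l[i]
      · have hval : starPainter ℓ hr h l[i] = hex.choose := by
          simp only [starPainter]
          rw [dif_pos hex]
        have hlt : degC h c u < ℓ - 1 := by
          rw [hcu.1, hval]
          exact hex.choose_spec u hcu.2
        calc degC (h ++ [(l[i], starPainter ℓ hr h l[i])]) c u ≤ degC h c u + 1 :=
            degC_snoc_le _ _ _ _ _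
          _ ≤ ℓ - 1 := by omega
      · rw [degC_snoc_ne _ _ _ _ _ hcu]
        exact ih c u
    · have heq : l.take (i + 1) = l.take i := by
        rw [List.take_of_length_le (by omega), List.take_of_length_le (by omega)]
      rw [heq]
      exact ih

lemma painter_wins {ℓ r : ℕ} (hℓ : 1 ≤ ℓ) (hr : 2 ≤ r) :
    PainterWinsTree (completeBipartiteGraph (Fin 1) (Fin ℓ)) r (r * (ℓ - 1)) := by
  intro a
  have hr0 : 0 < r := by omega
  refine ⟨starPainter ℓ hr0, ?_⟩
  intro l hv hTS hmono
  obtain ⟨c, f, hf⟩ := hmono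
  have hinv := starPainter_invariant hr0 l hv hTS l.length
  rw [List.take_length] at hinv
  set h := runPainter (starPainter ℓ hr0) l with hh
  set x := f (Sum.inl 0) with hx
  have hmem : ∀ j : Fin ℓ, (s(x, f (Sum.inr j)), c) ∈ h ∧ x ≠ f (Sum.inr j) := by
    intro j
    have := hf (Sum.inl 0) (Sum.inr j) (by simp)
    rw [colorGraph, fromEdgeSet_adj] at this
    exact this
  set g : Fin ℓ → Sym2 (Fin a) := fun j => s(x, f (Sum.inr j)) with hg
  have hginj : Function.Injective g := by
    intro j j' hjj
    rw [hg] at hjj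
    simp only [Sym2.eq, Sym2.rel_iff', Prod.mk.injEq, Prod.swap_prod_mk] at hjj
    rcases hjj with ⟨-, h2⟩ | ⟨h1, -⟩
    · exact Sum.inr_injective (f.injective h2)
    · exact absurd h1 (hmem j').2
  have hrange : Set.range g ⊆ {e : Sym2 (Fin a) | (e, c) ∈ h ∧ x ∈ e} := by
    rintro - ⟨j, rfl⟩
    exact ⟨(hmem j).1, by rw [hg]; exact Sym2.mem_mk_left _ _⟩
  have hcard : ℓ ≤ degC h c x := by
    have h1 : (Set.range g).ncard = ℓ := by
      rw [← Set.image_univ, Set.ncard_image_of_injective _ hginj, Set.ncard_univ,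
        Nat.card_eq_fintype_card, Fintype.card_fin]
    rw [← h1]
    exact Set.ncard_le_ncard hrange (Set.toFinite _)
  have := hinv c x
  omega

lemma builder_wins {ℓ r : ℕ} (hℓ : 1 ≤ ℓ) (hr : 2 ≤ r) :
    BuilderWinsTree (completeBipartiteGraph (Fin 1) (Fin ℓ)) r (r * (ℓ - 1) + 1) := by
  set N := r * (ℓ - 1) + 1 with hN
  refine ⟨N + 1, fun π => ?_⟩
  set l : List (Sym2 (Fin (N + 1))) := List.ofFn (fun i : Fin N => s(0, i.succ)) with hl
  have hlen : l.length = N := by simp [hl, hN]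
  have hinj : Function.Injective (fun i : Fin N => (s(0, i.succ) : Sym2 (Fin (N + 1)))) := by
    intro i j hij
    simp only [Sym2.eq, Sym2.rel_iff', Prod.mk.injEq, Prod.swap_prod_mk] at hij
    rcases hij with ⟨-, h2⟩ | ⟨h1, -⟩
    · exact Fin.succ_injective _ h2
    · exact absurd h1.symm (Fin.succ_ne_zero _)
  refine ⟨l, ⟨?_, ?_⟩, ?_, ?_⟩
  · rw [hl, List.nodup_ofFn]; exact hinj
  · intro e he
    rw [hl, List.mem_ofFn] at he
    obtain ⟨i, rfl⟩ := he
    simp only [Sym2.mk_isDiag_iff]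
    exact (Fin.succ_ne_zero i).symm
  · intro i
    constructor
    · apply star_isAcyclic (z := (0 : Fin (N + 1)))
      intro u v huv
      rw [boardOf, fromEdgeSet_adj] at huv
      have hmem : s(u, v) ∈ l := (List.take_sublist i l).subset huv.1
      rw [hl, List.mem_ofFn] at hmem
      obtain ⟨k, hk⟩ := hmem
      simp only [Sym2.eq, Sym2.rel_iff', Prod.mk.injEq, Prod.swap_prod_mk] at hk
      rcases hk with ⟨h1, -⟩ | ⟨h1, -⟩
      · exact Or.inl h1.symm
      · exact Or.inr h1.symm
    · intro S _
      have hsub : (boardOf (l.take i)).edgeSet ∩ {e | ∀ v ∈ e, v ∈ S} ⊆ ↑l.toFinset := by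
        rintro e ⟨he, -⟩
        rw [boardOf, edgeSet_fromEdgeSet] at he
        rw [Finset.mem_coe, List.mem_toFinset]
        exact (List.take_sublist i l).subset he.1
      calc edgesWithin (boardOf (l.take i)) S ≤ (↑l.toFinset : Set (Sym2 (Fin (N + 1)))).ncard :=
          Set.ncard_le_ncard hsub (Set.toFinite _)
        _ = l.toFinset.card := Set.ncard_coe_finset _
        _ ≤ l.length := List.toFinset_card_le _
        _ = N := hlen
  · set h := runPainter π l with hh
    have hhlen : h.length = N := by
      have := congrArg List.length (runPainter_map_fst π l)
      simpa [hlen] using this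
    set colorOf : Fin N → Fin r := fun i => (h[(i : ℕ)]'(by omega)).2 with hcolor
    have hpig : ∃ c, ℓ - 1 < (Finset.univ.filter fun i => colorOf i = c).card := by
      apply Fintype.exists_lt_card_fiber_of_mul_lt_card
      simp only [Fintype.card_fin]
      omega
    obtain ⟨c, hc⟩ := hpig
    obtain ⟨T, hTsub, hTcard⟩ :=
      Finset.exists_subset_card_eq (s := Finset.univ.filter fun i => colorOf i = c) (n := ℓ)
        (by omega)
    set φ := T.orderEmbOfFin hTcard with hφ
    have hentry : ∀ j : Fin ℓ, (s((0 : Fin (N + 1)), (φ j).succ), c) ∈ h := by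
      intro j
      have hjN : ((φ j : Fin N) : ℕ) < h.length := by omega
      have h1 : h[((φ j : Fin N) : ℕ)]'hjN = (s((0 : Fin (N + 1)), (φ j).succ), c) := by
        have hfst : (h[((φ j : Fin N) : ℕ)]'hjN).1 = s((0 : Fin (N + 1)), (φ j).succ) := by
          have hm : (h.map Prod.fst)[((φ j : Fin N) : ℕ)]'(by simp; omega) =
              (h[((φ j : Fin N) : ℕ)]'hjN).1 := List.getElem_map _
          rw [← hm]
          have := runPainter_map_fst π l
          rw [List.getElem_of_eq this]
          simp only [hl, List.getElem_ofFn, Fin.eta]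
        have hsnd : (h[((φ j : Fin N) : ℕ)]'hjN).2 = c := by
          have hmemT : φ j ∈ T := T.orderEmbOfFin_mem hTcard j
          have := hTsub hmemT
          rw [Finset.mem_filter] at this
          exact this.2
        exact Prod.ext hfst hsnd
      rw [← h1]
      exact List.getElem_mem _
    have hfinj : Function.Injective
        (Sum.elim (fun _ : Fin 1 => (0 : Fin (N + 1))) (fun j : Fin ℓ => (φ j).succ)) := by
      rintro (a | j) (b | j') huv
      · exact congrArg _ (Subsingleton.elim a b)
      · exact absurd huv.symm (Fin.succ_ne_zero _)
      · exact absurd huv (Fin.succ_ne_zero _)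
      · simp only [Sum.elim_inr] at huv
        exact congrArg _ (φ.injective (Fin.succ_injective _ huv))
    refine ⟨c, ⟨Sum.elim (fun _ : Fin 1 => (0 : Fin (N + 1))) (fun j : Fin ℓ => (φ j).succ),
      hfinj⟩, ?_⟩
    rintro (a | j) (b | j') huv
    · simp at huv
    · simp only [Function.Embedding.coeFn_mk, Sum.elim_inl, Sum.elim_inr]
      rw [colorGraph, fromEdgeSet_adj]
      exact ⟨hentry j', (Fin.succ_ne_zero _).symm⟩
    · simp only [Function.Embedding.coeFn_mk, Sum.elim_inl, Sum.elim_inr]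
      have : (colorGraph h c).Adj 0 (φ j).succ := by
        rw [colorGraph, fromEdgeSet_adj]
        exact ⟨hentry j, (Fin.succ_ne_zero _).symm⟩
      exact this.symm
    · simp at huv

/-- For the star `S_ℓ` with `ℓ` edges (`K_{1,ℓ}`) and `r ≥ 2` colors,
`k*(S_ℓ,r) = r(ℓ-1)+1`: Builder wins the deterministic `S_ℓ`-avoidance game with `r` colors
and tree size restriction `r(ℓ-1)+1`, and Painter wins it with tree size restriction
`r(ℓ-1)`. -/
theorem statement7 (ℓ r : ℕ) (hℓ : 1 ≤ ℓ) (hr : 2 ≤ r) :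
    BuilderWinsTree (completeBipartiteGraph (Fin 1) (Fin ℓ)) r (r * (ℓ - 1) + 1) ∧
    PainterWinsTree (completeBipartiteGraph (Fin 1) (Fin ℓ)) r (r * (ℓ - 1)) := by
  exact ⟨builder_wins hℓ hr, painter_wins hℓ hr⟩
end

section
/- Let P_8 denote the path with 8 edges. Painter has a winning strategy in the deterministic P_8-avoidance game with 2 colors and tree size restriction 38; consequently k*(P_8,2) ≥ 39. A winning strategy for Painter is: color an edge blue if and only if it is adjacent to a red edge and coloring it blue does not complete a blue copy of P_8, and otherwise color it red. -/
open SimpleGraph Filter Asymptotics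
open scoped Classical

/-- The Painter strategy (colors: `0` = red, `1` = blue): color an edge blue if and only if
it is adjacent to a red edge and coloring it blue does not complete a blue copy of the path
`P_ℓ` with `ℓ` edges; otherwise color it red. -/
noncomputable def blueIfSafeStrategy (ℓ n : ℕ) : PainterStrategy (Fin n) 2 := fun h e =>
  if (∃ e', (e', (0 : Fin 2)) ∈ h ∧ ∃ v, v ∈ e ∧ v ∈ e') ∧
      ¬ IsCopy (SimpleGraph.pathGraph (ℓ + 1))
        (SimpleGraph.fromEdgeSet (insert e {e' | (e', (1 : Fin 2)) ∈ h}))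
  then 1 else 0

namespace S13

lemma isCopy_mono {α β : Type} {F : SimpleGraph α} {G G' : SimpleGraph β}
    (h : IsCopy F G) (hle : G ≤ G') : IsCopy F G' := by
  obtain ⟨f, hf⟩ := h
  exact ⟨f, fun u v huv => hle (hf u v huv)⟩



def fW (d : ℕ) : ℕ := d + d / 2
def fS (d : ℕ) : ℕ := d + (d + 1) / 2
def gc (st : Bool) (d : ℕ) : ℕ := if st then fS d else fW d

def sigL (t : ℕ → ℕ) (i : ℕ) : Bool := (i == 0) || decide (t i < t (i - 1))
def sigR (t : ℕ → ℕ) (i : ℕ) : Bool := (i == 7) || decide (t i < t (i + 1))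

def tab : ℕ → Bool → Bool → List (ℕ × ℕ)
  | 8, _, _ => [(0,0)]
  | 7, false, false => [(11,0)]
  | 7, false, true => [(10,0)]
  | 7, true, _ => [(0,0)]
  | 6, false, false => [(10,1),(11,0)]
  | 6, false, true => [(10,0)]
  | 6, true, false => [(0,10),(10,1),(11,0)]
  | 6, true, true => [(0,10),(10,0)]
  | 5, false, false => [(11,11),(12,10)]
  | 5, false, true => [(11,10)]
  | 5, true, _ => [(0,10)]
  | 4, false, false => [(20,11),(21,10)]
  | 4, false, true => [(20,10)]
  | 4, true, false => [(0,11),(21,10)]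
  | 4, true, true => [(0,11),(20,10)]
  | 3, false, false => [(21,12),(22,11)]
  | 3, false, true => [(21,11)]
  | 3, true, false => [(0,20),(21,12),(22,11)]
  | 3, true, true => [(0,20),(21,11)]
  | 2, false, false => [(22,22),(23,21),(31,20)]
  | 2, false, true => [(22,21),(30,20)]
  | 2, true, false => [(0,21),(31,20)]
  | 2, true, true => [(0,21),(30,20)]
  | 1, false, false => [(31,22),(32,21)]
  | 1, false, true => [(31,21)]
  | 1, true, false => [(0,22),(32,21)]
  | 1, true, true => [(0,22),(31,21)]
  | 0, false, false => [(32,23),(33,22)]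
  | 0, false, true => [(32,22)]
  | 0, true, false => [(0,31),(32,23),(33,22)]
  | 0, true, true => [(0,31),(32,22)]
  | _, _, _ => []

def certVal (L : List (ℕ × ℕ)) (p : ℕ) : ℕ :=
  (L.map (fun br => max br.1 (p + br.2))).foldr min 1000000

lemma certVal_cons (x : ℕ × ℕ) (xs : List (ℕ × ℕ)) (p : ℕ) :
    certVal (x :: xs) p = min (max x.1 (p + x.2)) (certVal xs p) := rfl

lemma certVal_le {L : List (ℕ × ℕ)} {q : ℕ × ℕ} (hq : q ∈ L) (p : ℕ) :
    certVal L p ≤ max q.1 (p + q.2) := by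
  induction L with
  | nil => cases hq
  | cons x xs ih =>
    rw [certVal_cons]
    rcases List.mem_cons.mp hq with h | h
    · subst h; exact min_le_left _ _
    · exact le_trans (min_le_right _ _) (ih h)

def sumFrom (w : ℕ → ℕ) : ℕ → ℕ → ℕ
  | 0, _ => 0
  | (m+1), j => w j + sumFrom w m (j+1)

lemma sideA : ∀ j < 8, ∀ A sg : Bool, ∀ a < 8, ∀ sR : Bool, (j = 7 → sR = true) →
    ∃ q ∈ tab j A sg,
      q.1 ≤ gc (!sg) a + certVal (tab (j+1) true sR) (gc sR (7-a)) ∧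
      q.2 ≤ certVal (tab (j+1) true sR) (gc sR (7-a)) := by decide

lemma sideI : ∀ j < 8, ∀ sg sR : Bool,
    ∃ q ∈ tab j true sg,
      q.1 ≤ certVal (tab (j+1) false sR) 0 ∧
      q.2 ≤ certVal (tab (j+1) false sR) 0 := by decide

lemma claim (w t : ℕ → ℕ) (s : ℕ → Prop)
    (ht : ∀ i ≤ 7, ∀ j ≤ 7, i ≠ j → t i ≠ t j)
    (hcov : ∀ i ≤ 6, s i ∨ s (i+1))
    (hdem : ∀ i ≤ 7, s i → ∃ a b, a + b = 7 ∧
      gc (sigL t i) a ≤ w i ∧ gc (sigR t i) b ≤ w (i+1)) :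
    ∀ m, 1 ≤ m → ∀ j, j + m = 9 → ∀ A sg : Bool, ∀ p : ℕ,
    (A = false → 1 ≤ j ∧ ¬ s (j-1)) →
    ((j = 0 ∧ sg = false) ∨ (1 ≤ j ∧ sg = sigR t (j-1))) →
    p ≤ w j → certVal (tab j A sg) p ≤ sumFrom w m j := by
  intro m
  induction m with
  | zero => omega
  | succ m ih =>
    intro _ j hj A sg p hA hsg hp
    rcases Nat.eq_zero_or_pos m with hm0 | hm1
    · -- j = 8
      subst hm0
      have hj8 : j = 8 := by omega
      subst hj8
      have h2 : certVal (tab 8 A sg) p ≤ p := by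
        have := certVal_le (q := (0,0)) (L := tab 8 A sg)
          (by cases A <;> cases sg <;> decide) p
        simpa using this
      simp only [sumFrom]
      omega
    · -- j ≤ 7
      have hj7 : j ≤ 7 := by omega
      have hσL : sigL t j = !sg := by
        rcases hsg with ⟨hj0, hsg⟩ | ⟨hj1, hsg⟩
        · subst hj0 hsg; simp [sigL]
        · have h77 : ¬ (j - 1 = 7) := by omega
          have hne : t (j-1) ≠ t j := ht (j-1) (by omega) j (by omega) (by omega)
          have hj0 : ¬ (j = 0) := by omega
          have hj11 : j - 1 + 1 = j := by omega
          subst hsg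
          have e1 : sigR t (j-1) = decide (t (j-1) < t j) := by
            simp [sigR, h77, hj11]
          have e2 : sigL t j = decide (t j < t (j-1)) := by
            simp [sigL, hj0]
          rw [e1, e2]
          rcases Nat.lt_trichotomy (t (j-1)) (t j) with h | h | h
          · simp [h, Nat.lt_asymm h]
          · exact absurd h hne
          · simp [h, Nat.lt_asymm h]
      by_cases hs : s j
      · obtain ⟨a, b, hab, hL, hR⟩ := hdem j hj7 hs
        rw [hσL] at hL
        have hc : certVal (tab (j+1) true (sigR t j)) (gc (sigR t j) b)
            ≤ sumFrom w m (j+1) := by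
          apply ih hm1 (j+1) (by omega) true (sigR t j) _ (by simp)
            (Or.inr ⟨by omega, by simp⟩) hR
        have hb : b = 7 - a := by omega
        have hsR7 : j = 7 → sigR t j = true := by
          intro h7; subst h7; simp [sigR]
        obtain ⟨q, hq, h1, h2⟩ := sideA j (by omega) A sg a (by omega) (sigR t j) hsR7
        rw [← hb] at h1 h2
        have h3 := certVal_le hq p
        have h4 : max p (gc (!sg) a) ≤ w j := max_le hp hL
        calc certVal (tab j A sg) p ≤ max q.1 (p + q.2) := h3
          _ ≤ max p (gc (!sg) a) + certVal (tab (j+1) true (sigR t j)) (gc (sigR t j) b) := by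
              omega
          _ ≤ w j + sumFrom w m (j+1) := Nat.add_le_add h4 hc
          _ = sumFrom w (m+1) j := rfl
      · have hAt : A = true := by
          cases A
          · obtain ⟨hj1, hns⟩ := hA rfl
            have := hcov (j-1) (by omega)
            have hj11 : j - 1 + 1 = j := by omega
            rw [hj11] at this
            tauto
          · rfl
        subst hAt
        have hc : certVal (tab (j+1) false (sigR t j)) 0 ≤ sumFrom w m (j+1) := by
          apply ih hm1 (j+1) (by omega) false (sigR t j) 0
            (fun _ => ⟨by omega, by simpa using hs⟩)
            (Or.inr ⟨by omega, by simp⟩) (Nat.zero_le _)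
        obtain ⟨q, hq, h1, h2⟩ := sideI j (by omega) sg (sigR t j)
        have h3 := certVal_le hq p
        calc certVal (tab j true sg) p ≤ max q.1 (p + q.2) := h3
          _ ≤ p + certVal (tab (j+1) false (sigR t j)) 0 := by omega
          _ ≤ w j + sumFrom w m (j+1) := Nat.add_le_add hp hc
          _ = sumFrom w (m+1) j := rfl

lemma arith_main (w t : ℕ → ℕ) (s : ℕ → Prop)
    (ht : ∀ i ≤ 7, ∀ j ≤ 7, i ≠ j → t i ≠ t j)
    (hcov : ∀ i ≤ 6, s i ∨ s (i+1))
    (hdem : ∀ i ≤ 7, s i → ∃ a b, a + b = 7 ∧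
      gc (sigL t i) a ≤ w i ∧ gc (sigR t i) b ≤ w (i+1)) :
    31 ≤ w 0 + w 1 + w 2 + w 3 + w 4 + w 5 + w 6 + w 7 + w 8 := by
  have h := claim w t s ht hcov hdem 9 (by omega) 0 (by omega) true false 0
    (by simp) (Or.inl ⟨rfl, rfl⟩) (Nat.zero_le _)
  have h31 : certVal (tab 0 true false) 0 = 31 := by decide
  rw [h31] at h
  norm_num [sumFrom] at h
  omega



lemma chain_reach {V : Type} (H : SimpleGraph V) (u : ℕ → V) (p : ℕ) :
    ∀ q, p ≤ q → (∀ k, p ≤ k → k < q → H.Adj (u k) (u (k+1))) → H.Reachable (u p) (u q) := by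
  intro q
  induction q with
  | zero => intro hq _; have : p = 0 := by omega
            subst this; exact Reachable.refl _
  | succ q ih =>
    intro hq hadj
    rcases Nat.eq_or_lt_of_le hq with h | h
    · subst h; exact Reachable.refl _
    · have hpq : p ≤ q := by omega
      exact (ih hpq (fun k hk hk' => hadj k hk (by omega))).trans
        (hadj q hpq (by omega)).reachable

lemma sym2_eq_of_mem {V : Type} {e : Sym2 V} {x y : V} (hx : x ∈ e) (hy : y ∈ e)
    (hxy : x ≠ y) : e = s(x, y) := by
  induction e with
  | _ a b =>
    rw [Sym2.mem_iff] at hx hy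
    rcases hx with rfl | rfl <;> rcases hy with rfl | rfl
    · exact absurd rfl hxy
    · rfl
    · exact Sym2.eq_swap
    · exact absurd rfl hxy

lemma cover_card (k0 : ℕ) (hk0 : 1 ≤ k0) :
    ∀ d, ∀ A : Finset ℕ, (∀ k, k0 ≤ k → k ≤ d → (k-1 ∈ A ∨ k ∈ A)) →
    (d + 2 - k0)/2 ≤ A.card := by
  intro d
  induction d using Nat.strong_induction_on with
  | _ d ih =>
    intro A hA
    by_cases hd : d < k0
    · have : (d + 2 - k0) / 2 = 0 := by omega
      omega
    · push_neg at hd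
      obtain hx | hx := hA d hd le_rfl
      · have h1 : (d - 2 + 2 - k0)/2 ≤ (A.erase (d-1)).card := by
          apply ih (d-2) (by omega)
          intro k hk hk'
          rcases hA k hk (by omega) with h | h
          · exact Or.inl (Finset.mem_erase.mpr ⟨by omega, h⟩)
          · exact Or.inr (Finset.mem_erase.mpr ⟨by omega, h⟩)
        have h2 : (A.erase (d-1)).card = A.card - 1 := Finset.card_erase_of_mem hx
        have h3 : 1 ≤ A.card := Finset.card_pos.mpr ⟨_, hx⟩
        omega
      · have h1 : (d - 2 + 2 - k0)/2 ≤ (A.erase d).card := by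
          apply ih (d-2) (by omega)
          intro k hk hk'
          rcases hA k hk (by omega) with h | h
          · exact Or.inl (Finset.mem_erase.mpr ⟨by omega, h⟩)
          · exact Or.inr (Finset.mem_erase.mpr ⟨by omega, h⟩)
        have h2 : (A.erase d).card = A.card - 1 := Finset.card_erase_of_mem hx
        have h3 : 1 ≤ A.card := Finset.card_pos.mpr ⟨_, hx⟩
        omega

lemma no_chord {V : Type} {G : SimpleGraph V} (hacyc : G.IsAcyclic)
    (u : ℕ → V) (d : ℕ) (huinj : ∀ k ≤ d, ∀ m ≤ d, u k = u m → k = m)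
    (hadj : ∀ k < d, G.Adj (u k) (u (k+1))) :
    ∀ m m', m ≤ d → m' ≤ d → m + 2 ≤ m' → ¬ G.Adj (u m) (u m') := by
  intro m m' hm hm' hmm hAdj
  have hbridge := (isAcyclic_iff_forall_adj_isBridge.mp hacyc) hAdj
  rw [isBridge_iff] at hbridge
  apply hbridge
  apply chain_reach (G \ SimpleGraph.fromEdgeSet {s(u m, u m')}) u m m' (by omega)
  intro k hk hk'
  have hGadj : G.Adj (u k) (u (k+1)) := hadj k (by omega)
  have hne : s(u k, u (k+1)) ≠ s(u m, u m') := by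
    intro h
    rcases Sym2.eq_iff.mp h with ⟨h1, h2⟩ | ⟨h1, h2⟩
    · have := huinj k (by omega) m (by omega) h1
      have := huinj (k+1) (by omega) m' (by omega) h2
      omega
    · have := huinj k (by omega) m' (by omega) h1
      have := huinj (k+1) (by omega) m (by omega) h2
      omega
  have : (G.deleteEdges {s(u m, u m')}).Adj (u k) (u (k+1)) := by
    rw [SimpleGraph.deleteEdges_adj]
    exact ⟨hGadj, by simpa using hne⟩
  exact this

lemma vertexCost {V : Type} [Fintype V] (G : SimpleGraph V) (hacyc : G.IsAcyclic)
    (R B : Set (Sym2 V)) (τ : Sym2 V → ℕ)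
    (hRG : R ⊆ G.edgeSet) (hBG : B ⊆ G.edgeSet) (hRB : Disjoint R B)
    (hblue : ∀ e ∈ B, ∃ e' ∈ R, τ e' < τ e ∧ ∃ x, x ∈ e ∧ x ∈ e')
    (PE : Set (Sym2 V)) (hPER : PE ⊆ R)
    (x0 : V) (C : Set V) (hC : C = {x | (G.deleteEdges PE).Reachable x0 x})
    (hx0PE : ∀ p ∈ PE, ∀ z ∈ p, z ∈ C → z = x0)
    (T : ℕ) (d : ℕ)
    (u : ℕ → V) (hu0 : u 0 = x0) (huinj : ∀ k ≤ d, ∀ m ≤ d, u k = u m → k = m)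
    (hupath : ∀ k < d, s(u k, u (k+1)) ∈ B ∧ τ s(u k, u (k+1)) < T)
    (k0 : ℕ) (hk0 : k0 = 1 ∨ k0 = 2)
    (hstrong : k0 = 1 → ∀ p ∈ PE, x0 ∈ p → ¬ τ p < T) :
    d + (d + 2 - k0)/2 ≤ (G.edgeSet ∩ {e | ∀ z ∈ e, z ∈ C}).ncard := by
  have hk01 : 1 ≤ k0 := by omega
  -- blue path edges are in G
  have hpadj : ∀ k < d, G.Adj (u k) (u (k+1)) := fun k hk =>
    (SimpleGraph.mem_edgeSet _).mp (hBG (hupath k hk).1)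
  -- path vertices lie in C
  have hCu : ∀ k ≤ d, u k ∈ C := by
    intro k hk
    rw [hC]
    have := chain_reach (G.deleteEdges PE) u 0 k (by omega) ?_
    · rw [hu0] at this; exact this
    · intro m hm hm'
      rw [SimpleGraph.deleteEdges_adj]
      refine ⟨hpadj m (by omega), fun hmem => ?_⟩
      exact Set.disjoint_left.mp hRB (hPER hmem) (hupath m (by omega)).1
  -- C is closed under deleteEdges-adjacency
  have hCclosed : ∀ x y, x ∈ C → G.Adj x y → s(x,y) ∉ PE → y ∈ C := by
    intro x y hx hxy hP
    rw [hC] at hx ⊢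
    have hadj2 : (G.deleteEdges PE).Adj x y := by
      rw [SimpleGraph.deleteEdges_adj]; exact ⟨hxy, hP⟩
    exact hx.trans hadj2.reachable
  -- the sets
  set Tset : Set (Sym2 V) := G.edgeSet ∩ {e | ∀ z ∈ e, z ∈ C} with hTset
  set BPE : Set (Sym2 V) := (fun k => s(u k, u (k+1))) '' ↑(Finset.range d) with hBPE
  set X : Set (Sym2 V) := {e | e ∈ Tset ∧ e ∈ R ∧ ∃ m ≤ d, u m ∈ e} with hX
  -- unique meeting index
  have huniq : ∀ e ∈ X, ∀ m ≤ d, ∀ m' ≤ d, u m ∈ e → u m' ∈ e → m = m' := by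
    intro e he m hm m' hm' hum hum'
    by_contra hne
    -- wlog m < m'
    have key : ∀ a b, a ≤ d → b ≤ d → a < b → u a ∈ e → u b ∈ e → False := by
      intro a b ha hb hab hua hub
      have hneq : u a ≠ u b := fun h => by have := huinj a ha b hb h; omega
      have heq : e = s(u a, u b) := sym2_eq_of_mem hua hub hneq
      rcases Nat.eq_or_lt_of_le hab with h1 | h1
      · -- b = a + 1 : e is a blue path edge but also red
        have : e ∈ B := by rw [heq, ← h1]; exact (hupath a (by omega)).1
        exact Set.disjoint_left.mp hRB he.2.1 this
      · -- chord
        have hGadj : G.Adj (u a) (u b) := by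
          rw [← SimpleGraph.mem_edgeSet, ← heq]; exact he.1.1
        exact no_chord hacyc u d huinj hpadj a b ha hb (by omega) hGadj
    rcases Nat.lt_or_ge m m' with h | h
    · exact key m m' hm hm' h hum hum'
    · exact key m' m hm' hm (by omega) hum' hum
  -- the index set A
  set A : Finset ℕ := (Finset.range (d+1)).filter (fun m => ∃ e ∈ X, u m ∈ e) with hA
  -- cover property
  have hcover : ∀ k, k0 ≤ k → k ≤ d → (k-1 ∈ A ∨ k ∈ A) := by
    intro k hk hkd
    have hk1 : 1 ≤ k := by omega
    have hbe : s(u (k-1), u k) ∈ B := by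
      have := (hupath (k-1) (by omega)).1
      have hkk : k - 1 + 1 = k := by omega
      rwa [hkk] at this
    have hbt : τ s(u (k-1), u k) < T := by
      have := (hupath (k-1) (by omega)).2
      have hkk : k - 1 + 1 = k := by omega
      rwa [hkk] at this
    obtain ⟨e', he'R, he'τ, x, hxbe, hxe'⟩ := hblue _ hbe
    -- x = u (k-1) or u k
    rw [Sym2.mem_iff] at hxbe
    -- e' is not a path edge
    have he'PE : e' ∉ PE := by
      intro hPE
      rcases hxbe with h | h
      · -- x = u (k-1)
        have hzC : u (k-1) ∈ C := hCu (k-1) (by omega)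
        have := hx0PE e' hPE (u (k-1)) (h ▸ hxe') hzC
        have hm0 : k - 1 = 0 := by
          apply huinj (k-1) (by omega) 0 (by omega)
          rw [this, hu0]
        -- k = 1, so k0 = 1, strong case
        have hk02 : k0 = 1 := by omega
        have hx0e : x0 ∈ e' := by rw [← this, ← h]; exact hxe'
        exact hstrong hk02 e' hPE hx0e (by omega)
      · have hzC : u k ∈ C := hCu k hkd
        have := hx0PE e' hPE (u k) (h ▸ hxe') hzC
        have hm0 : k = 0 := by
          apply huinj k (by omega) 0 (by omega)
          rw [this, hu0]
        omega
    -- e' has its endpoints in C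
    have hxC : x ∈ C := by
      rcases hxbe with h | h
      · rw [h]; exact hCu (k-1) (by omega)
      · rw [h]; exact hCu k hkd
    obtain ⟨y, hy⟩ := Sym2.mem_iff_exists.mp hxe'
    have he'G : e' ∈ G.edgeSet := hRG he'R
    have hGxy : G.Adj x y := by rw [← SimpleGraph.mem_edgeSet, ← hy]; exact he'G
    have hyC : y ∈ C := hCclosed x y hxC hGxy (by rw [← hy]; exact he'PE)
    have he'X : e' ∈ X := by
      refine ⟨⟨he'G, ?_⟩, he'R, ?_⟩
      · intro z hz
        rw [hy, Sym2.mem_iff] at hz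
        rcases hz with rfl | rfl
        · exact hxC
        · exact hyC
      · rcases hxbe with h | h
        · exact ⟨k-1, by omega, h ▸ hxe'⟩
        · exact ⟨k, hkd, h ▸ hxe'⟩
    rcases hxbe with h | h
    · left
      rw [hA, Finset.mem_filter]
      exact ⟨Finset.mem_range.mpr (by omega), e', he'X, h ▸ hxe'⟩
    · right
      rw [hA, Finset.mem_filter]
      exact ⟨Finset.mem_range.mpr (by omega), e', he'X, h ▸ hxe'⟩
  -- |A| ≤ ncard X
  have hAX : A.card ≤ X.ncard := by
    have hmemd : ∀ m ∈ A, m ≤ d := by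
      intro m hm
      have := (Finset.mem_filter.mp hm).1
      simp only [Finset.mem_range] at this
      omega
    set ψ : ℕ → Sym2 V := fun m => if h : ∃ e ∈ X, u m ∈ e then h.choose else s(u 0, u 0)
      with hψ
    have hψspec : ∀ m ∈ A, ψ m ∈ X ∧ u m ∈ ψ m := by
      intro m hm
      rw [hA, Finset.mem_filter] at hm
      obtain ⟨_, hex⟩ := hm
      rw [hψ]
      simp only [dif_pos hex]
      exact ⟨hex.choose_spec.1, hex.choose_spec.2⟩
    have hinj : Set.InjOn ψ ↑A := by
      intro m hm m' hm' heq
      have hm2 : m ∈ A := by simpa using hm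
      have hm3 : m' ∈ A := by simpa using hm'
      obtain ⟨hX1, hu1⟩ := hψspec m hm2
      obtain ⟨hX2, hu2⟩ := hψspec m' hm3
      exact huniq (ψ m) hX1 m (hmemd m hm2) m' (hmemd m' hm3) hu1 (heq ▸ hu2)
    calc A.card = (↑A : Set ℕ).ncard := (Set.ncard_coe_finset A).symm
      _ = (ψ '' ↑A).ncard := (Set.ncard_image_of_injOn hinj).symm
      _ ≤ X.ncard := Set.ncard_le_ncard
          (by rintro e ⟨m, hm, rfl⟩; exact (hψspec m (by simpa using hm)).1)
          (Set.toFinite X)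
  -- count of blue path edges
  have hBPEcard : BPE.ncard = d := by
    have hinj : Set.InjOn (fun k => s(u k, u (k+1))) ↑(Finset.range d) := by
      intro k hk m hm heq
      simp only [Finset.coe_range, Set.mem_Iio] at hk hm
      simp only at heq
      rcases Sym2.eq_iff.mp heq with ⟨h1, _⟩ | ⟨h1, h2⟩
      · exact huinj k (by omega) m (by omega) h1
      · have e1 := huinj k (by omega) (m+1) (by omega) h1
        have e2 := huinj (k+1) (by omega) m (by omega) h2
        omega
    rw [hBPE, Set.ncard_image_of_injOn hinj, Set.ncard_coe_finset, Finset.card_range]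
  have hdisj : Disjoint BPE X := by
    rw [Set.disjoint_left]
    rintro e ⟨k, hk, rfl⟩ heX
    have hkd : k < d := by simpa using hk
    exact Set.disjoint_left.mp hRB heX.2.1 (hupath k hkd).1
  have hBPET : BPE ⊆ Tset := by
    rintro e ⟨k, hk, rfl⟩
    have hkd : k < d := by simpa using hk
    refine ⟨hBG (hupath k hkd).1, ?_⟩
    intro z hz
    rw [Sym2.mem_iff] at hz
    rcases hz with rfl | rfl
    · exact hCu k (by omega)
    · exact hCu (k+1) (by omega)
  have hunion : BPE ∪ X ⊆ Tset := Set.union_subset hBPET (fun e he => he.1)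
  have hcard : (BPE ∪ X).ncard = BPE.ncard + X.ncard :=
    Set.ncard_union_eq hdisj (Set.toFinite _) (Set.toFinite _)
  have hcc := cover_card k0 hk01 d A hcover
  have hle : (BPE ∪ X).ncard ≤ Tset.ncard := Set.ncard_le_ncard hunion (Set.toFinite _)
  omega




def BPath {V : Type} (W : Set (Sym2 V)) (x : V) (d : ℕ) : Prop :=
  ∃ u : ℕ → V, u 0 = x ∧ (∀ k ≤ d, ∀ m ≤ d, u k = u m → k = m) ∧
    ∀ k < d, s(u k, u (k+1)) ∈ W

lemma extract {V : Type} (W : Set (Sym2 V)) (e : Sym2 V) (x y : V)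
    (hxy : e = s(x, y))
    (hfree : ¬ IsCopy (SimpleGraph.pathGraph 9) (SimpleGraph.fromEdgeSet W))
    (hcopy : IsCopy (SimpleGraph.pathGraph 9) (SimpleGraph.fromEdgeSet (insert e W))) :
    ∃ a b, a + b = 7 ∧ BPath W x a ∧ BPath W y b := by
  obtain ⟨f, hf⟩ := hcopy
  set F : ℕ → V := fun m => if h : m < 9 then f ⟨m, h⟩ else f ⟨0, by omega⟩ with hF
  have hFeq : ∀ m (h : m < 9), F m = f ⟨m, h⟩ := by
    intro m h; simp only [hF, dif_pos h]
  have hFinj : ∀ k ≤ 8, ∀ m ≤ 8, F k = F m → k = m := by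
    intro k hk m hm h
    rw [hFeq k (by omega), hFeq m (by omega)] at h
    have := f.injective h
    simpa using (Fin.mk.injEq _ _ _ _ ▸ this)
  have hedge : ∀ k < 8, s(F k, F (k+1)) ∈ insert e W := by
    intro k hk
    have hadj : (SimpleGraph.pathGraph 9).Adj ⟨k, by omega⟩ ⟨k+1, by omega⟩ := by
      rw [SimpleGraph.pathGraph_adj]; left; rfl
    have h2 := hf _ _ hadj
    rw [SimpleGraph.fromEdgeSet_adj] at h2
    rw [hFeq k (by omega), hFeq (k+1) (by omega)]
    exact h2.1
  have hne : ∀ k ≤ 8, ∀ m ≤ 8, k ≠ m → F k ≠ F m := by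
    intro k hk m hm hkm h
    exact hkm (hFinj k hk m hm h)
  -- some edge of the copy equals e
  have hk0 : ∃ k0 < 8, s(F k0, F (k0+1)) = e := by
    by_contra hcon
    push_neg at hcon
    apply hfree
    refine ⟨f, fun u v huv => ?_⟩
    rw [SimpleGraph.fromEdgeSet_adj]
    refine ⟨?_, fun h => (SimpleGraph.pathGraph 9).ne_of_adj huv (f.injective h)⟩
    rw [SimpleGraph.pathGraph_adj] at huv
    rcases huv with h | h
    · have hv8 : (v : ℕ) < 9 := v.isLt
      have hu8 : (u : ℕ) < 8 := by omega
      have h1 : f u = F u.val := by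
        rw [hFeq u.val (by omega), Fin.eta]
      have h2 : f v = F v.val := by
        rw [hFeq v.val v.isLt, Fin.eta]
      rw [h1, h2, ← h]
      rcases hedge u.val hu8 with h3 | h3
      · exact absurd h3 (hcon u.val hu8)
      · exact h3
    · have hu8 : (u : ℕ) < 9 := u.isLt
      have hv8 : (v : ℕ) < 8 := by omega
      have h1 : f v = F v.val := by rw [hFeq v.val v.isLt, Fin.eta]
      have h2 : f u = F u.val := by rw [hFeq u.val u.isLt, Fin.eta]
      rw [h1, h2, ← h, Sym2.eq_swap]
      rcases hedge v.val hv8 with h3 | h3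
      · exact absurd h3 (hcon v.val hv8)
      · exact h3
  obtain ⟨k0, hk0lt, hk0e⟩ := hk0
  -- edges other than the k0-th are in W
  have hW : ∀ j < 8, j ≠ k0 → s(F j, F (j+1)) ∈ W := by
    intro j hj hjk
    rcases hedge j hj with h3 | h3
    · exfalso
      rw [← hk0e] at h3
      rcases Sym2.eq_iff.mp h3 with ⟨ha, hb⟩ | ⟨ha, hb⟩
      · exact hjk (hFinj j (by omega) k0 (by omega) ha)
      · have := hFinj j (by omega) (k0+1) (by omega) ha
        have := hFinj (j+1) (by omega) k0 (by omega) hb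
        omega
    · exact h3
  have left : BPath W (F k0) k0 := by
    refine ⟨fun m => F (k0 - m), by simp, ?_, ?_⟩
    · intro k hk m hm h
      have := hFinj (k0 - k) (by omega) (k0 - m) (by omega) h
      omega
    · intro k hk
      obtain ⟨j, hj⟩ : ∃ j, k0 - k = j + 1 := ⟨k0 - k - 1, by omega⟩
      show s(F (k0 - k), F (k0 - (k+1))) ∈ W
      have h3 : k0 - (k+1) = j := by omega
      rw [h3, hj, Sym2.eq_swap]
      exact hW j (by omega) (by omega)
  have right : BPath W (F (k0+1)) (7 - k0) := by
    refine ⟨fun m => F (k0 + 1 + m), by simp, ?_, ?_⟩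
    · intro k hk m hm h
      have := hFinj (k0 + 1 + k) (by omega) (k0 + 1 + m) (by omega) h
      omega
    · intro k hk
      show s(F (k0 + 1 + k), F (k0 + 1 + (k+1))) ∈ W
      have h3 : k0 + 1 + (k+1) = (k0 + 1 + k) + 1 := by omega
      rw [h3]
      exact hW (k0 + 1 + k) (by omega) (by omega)
  rw [← hk0e] at hxy
  rcases Sym2.eq_iff.mp hxy with ⟨ha, hb⟩ | ⟨ha, hb⟩
  · exact ⟨k0, 7 - k0, by omega, ha ▸ left, hb ▸ right⟩
  · exact ⟨7 - k0, k0, by omega, hb ▸ right, ha ▸ left⟩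



theorem static {V : Type} [Fintype V]
    (G : SimpleGraph V) (hacyc : G.IsAcyclic)
    (hts : ∀ S : Set V, (G.induce S).Connected →
      (G.edgeSet ∩ {e | ∀ z ∈ e, z ∈ S}).ncard ≤ 38)
    (R B : Set (Sym2 V)) (τ : Sym2 V → ℕ)
    (hRG : R ⊆ G.edgeSet) (hBG : B ⊆ G.edgeSet) (hRB : Disjoint R B)
    (hτ : Set.InjOn τ (R ∪ B))
    (hblue : ∀ e ∈ B, ∃ e' ∈ R, τ e' < τ e ∧ ∃ x, x ∈ e ∧ x ∈ e')
    (hbluefree : ¬ IsCopy (SimpleGraph.pathGraph 9) (SimpleGraph.fromEdgeSet B))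
    (hred : ∀ e ∈ R, (¬ ∃ e' ∈ R, τ e' < τ e ∧ ∃ x, x ∈ e ∧ x ∈ e') ∨
       IsCopy (SimpleGraph.pathGraph 9)
         (SimpleGraph.fromEdgeSet (insert e {b | b ∈ B ∧ τ b < τ e})))
    (hcopy : IsCopy (SimpleGraph.pathGraph 9) (SimpleGraph.fromEdgeSet R)) : False := by
  classical
  obtain ⟨f, hf⟩ := hcopy
  set v : ℕ → V := fun j => if h : j < 9 then f ⟨j, h⟩ else f ⟨0, by omega⟩ with hv
  have hveq : ∀ j (h : j < 9), v j = f ⟨j, h⟩ := fun j h => by simp only [hv, dif_pos h]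
  have hvinj : ∀ j ≤ 8, ∀ k ≤ 8, v j = v k → j = k := by
    intro j hj k hk h
    rw [hveq j (by omega), hveq k (by omega)] at h
    have := f.injective h
    simpa using (Fin.mk.injEq _ _ _ _ ▸ this)
  have hpeR : ∀ i < 8, s(v i, v (i+1)) ∈ R := by
    intro i hi
    have hadj : (SimpleGraph.pathGraph 9).Adj ⟨i, by omega⟩ ⟨i+1, by omega⟩ := by
      rw [SimpleGraph.pathGraph_adj]; left; rfl
    have h2 := hf _ _ hadj
    rw [SimpleGraph.fromEdgeSet_adj] at h2
    rw [hveq i (by omega), hveq (i+1) (by omega)]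
    exact h2.1
  set pe : ℕ → Sym2 V := fun i => s(v i, v (i+1)) with hpe
  have hpeR' : ∀ i < 8, pe i ∈ R := hpeR
  have hpeinj : ∀ i ≤ 7, ∀ i' ≤ 7, pe i = pe i' → i = i' := by
    intro i hi i' hi' h
    rcases Sym2.eq_iff.mp h with ⟨h1, _⟩ | ⟨h1, h2⟩
    · exact hvinj i (by omega) i' (by omega) h1
    · have e1 := hvinj i (by omega) (i'+1) (by omega) h1
      have e2 := hvinj (i+1) (by omega) i' (by omega) h2
      omega
  set PE : Set (Sym2 V) := pe '' ↑(Finset.range 8) with hPEdef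
  have hPEmem : ∀ i < 8, pe i ∈ PE := by
    intro i hi
    exact ⟨i, by simpa using hi, rfl⟩
  have hPER : PE ⊆ R := by
    rintro e ⟨i, hi, rfl⟩
    exact hpeR' i (by simpa using hi)
  have hpeG : ∀ i < 8, pe i ∈ G.edgeSet := fun i hi => hRG (hpeR' i hi)
  have hpadjG : ∀ i < 8, G.Adj (v i) (v (i+1)) :=
    fun i hi => (SimpleGraph.mem_edgeSet _).mp (hpeG i hi)
  -- the components of G minus path edges
  set C : ℕ → Set V := fun j => {x | (G.deleteEdges PE).Reachable (v j) x} with hCdef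
  have hCmem : ∀ j, v j ∈ C j := fun j => Reachable.refl _
  have key2 : ∀ j ≤ 8, ∀ k ≤ 8, j ≠ k → ¬ (G.deleteEdges PE).Reachable (v j) (v k) := by
    have key : ∀ j k, j < k → k ≤ 8 → ¬ (G.deleteEdges PE).Reachable (v j) (v k) := by
      intro j k hjk hk hreach
      have hadjj : G.Adj (v j) (v (j+1)) := hpadjG j (by omega)
      have hbridge := (isAcyclic_iff_forall_adj_isBridge.mp hacyc) hadjj
      rw [isBridge_iff] at hbridge
      apply hbridge
      have hmono : G.deleteEdges PE ≤ G.deleteEdges {pe j} := by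
        intro a b hab
        rw [SimpleGraph.deleteEdges_adj] at hab ⊢
        refine ⟨hab.1, fun hmem => hab.2 ?_⟩
        rw [Set.mem_singleton_iff] at hmem
        rw [hmem]
        exact hPEmem j (by omega)
      have hchain : (G.deleteEdges {pe j}).Reachable (v (j+1)) (v k) := by
        apply chain_reach (G.deleteEdges {pe j}) v (j+1) k (by omega)
        intro m hm hm'
        rw [SimpleGraph.deleteEdges_adj]
        refine ⟨hpadjG m (by omega), fun hmem => ?_⟩
        rw [Set.mem_singleton_iff] at hmem
        have := hpeinj m (by omega) j (by omega) hmem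
        omega
      exact (hreach.mono hmono).trans hchain.symm
    intro j hj k hk hjk hreach
    rcases Nat.lt_or_ge j k with h | h
    · exact key j k h hk hreach
    · exact key k j (by omega) hj hreach.symm
  have hvC : ∀ m ≤ 8, ∀ j ≤ 8, v m ∈ C j → m = j := by
    intro m hm j hj hmem
    by_contra hne
    exact key2 j hj m hm (fun h => hne h.symm) hmem
  -- vertex of an edge
  have sym2_pick : ∀ e : Sym2 V, ∃ x, x ∈ e := by
    intro e
    induction e with
    | _ a b => exact ⟨a, by rw [Sym2.mem_iff]; left; rfl⟩
  -- the big component S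
  set S : Set V := {x | G.Reachable (v 0) x} with hSdef
  have hreach0 : ∀ m ≤ 8, G.Reachable (v 0) (v m) := by
    intro m hm
    exact chain_reach G v 0 m (by omega) (fun k _ hk' => hpadjG k (by omega))
  have hCS : ∀ j ≤ 8, C j ⊆ S := by
    intro j hj x hx
    exact (hreach0 j hj).trans (hx.mono (SimpleGraph.deleteEdges_le PE))
  have hSconn : (G.induce S).Connected := by
    apply SimpleGraph.induce_connected_of_patches (v 0)
      (⟨SimpleGraph.Walk.nil⟩ : G.Reachable (v 0) (v 0))
    intro x hx
    obtain ⟨p⟩ := (hx : G.Reachable (v 0) x)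
    refine ⟨{y | y ∈ p.support}, ?_, p.start_mem_support, p.end_mem_support, ?_⟩
    · intro y hy
      simp only [Set.mem_setOf_eq] at hy
      rw [SimpleGraph.Walk.mem_support_iff_exists_append] at hy
      obtain ⟨q, _, _⟩ := hy
      exact ⟨q⟩
    · exact p.connected_induce_support.preconnected _ _
  -- arithmetic data
  set t : ℕ → ℕ := fun i => τ (pe i) with htdef
  set sflag : ℕ → Prop := fun i => IsCopy (SimpleGraph.pathGraph 9)
    (SimpleGraph.fromEdgeSet (insert (pe i) {b | b ∈ B ∧ τ b < τ (pe i)})) with hsdef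
  set w : ℕ → ℕ := fun j => (G.edgeSet ∩ {e | ∀ z ∈ e, z ∈ C j}).ncard with hwdef
  have ht : ∀ i ≤ 7, ∀ j ≤ 7, i ≠ j → t i ≠ t j := by
    intro i hi j hj hij heq
    have := hτ (Or.inl (hpeR' i (by omega))) (Or.inl (hpeR' j (by omega))) heq
    exact hij (hpeinj i hi j hj this)
  have hcov : ∀ i ≤ 6, sflag i ∨ sflag (i+1) := by
    intro i hi
    have hmem1 : v (i+1) ∈ pe i := by rw [hpe, Sym2.mem_iff]; right; rfl
    have hmem2 : v (i+1) ∈ pe (i+1) := by rw [hpe, Sym2.mem_iff]; left; rfl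
    have hne : t i ≠ t (i+1) := ht i (by omega) (i+1) (by omega) (by omega)
    rcases Nat.lt_or_ge (t i) (t (i+1)) with h | h
    · right
      rcases hred (pe (i+1)) (hpeR' (i+1) (by omega)) with hno | hyes
      · exact absurd ⟨pe i, hpeR' i (by omega), h, v (i+1), hmem2, hmem1⟩ hno
      · exact hyes
    · left
      have h' : t (i+1) < t i := by omega
      rcases hred (pe i) (hpeR' i (by omega)) with hno | hyes
      · exact absurd ⟨pe (i+1), hpeR' (i+1) (by omega), h', v (i+1), hmem1, hmem2⟩ hno
      · exact hyes
  -- the demand hypothesis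
  have hx0PE : ∀ j ≤ 8, ∀ p ∈ PE, ∀ z ∈ p, z ∈ C j → z = v j := by
    rintro j hj p ⟨i, hi, rfl⟩ z hz hzC
    have hi8 : i < 8 := by simpa using hi
    rw [hpe, Sym2.mem_iff] at hz
    rcases hz with rfl | rfl
    · have := hvC i (by omega) j hj hzC
      rw [this]
    · have := hvC (i+1) (by omega) j hj hzC
      rw [this]
  have hdem : ∀ i ≤ 7, sflag i → ∃ a b, a + b = 7 ∧
      gc (sigL t i) a ≤ w i ∧ gc (sigR t i) b ≤ w (i+1) := by
    intro i hi hsi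
    have hWfree : ¬ IsCopy (SimpleGraph.pathGraph 9)
        (SimpleGraph.fromEdgeSet {b | b ∈ B ∧ τ b < τ (pe i)}) := by
      intro hcon
      apply hbluefree
      apply isCopy_mono hcon
      apply SimpleGraph.fromEdgeSet_mono
      intro b hb
      exact hb.1
    obtain ⟨a, b, hab, hBPa, hBPb⟩ := extract {b | b ∈ B ∧ τ b < τ (pe i)} (pe i)
      (v i) (v (i+1)) rfl hWfree hsi
    refine ⟨a, b, hab, ?_, ?_⟩
    · -- bound at v i
      obtain ⟨u, hu0, huinj, hupath⟩ := hBPa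
      by_cases hsl : sigL t i = true
      · have hstrong : ∀ p ∈ PE, v i ∈ p → ¬ τ p < τ (pe i) := by
          rintro p ⟨i', hi', rfl⟩ hvp hlt
          have hi'8 : i' < 8 := by simpa using hi'
          rw [hpe, Sym2.mem_iff] at hvp
          have hsl' : i = 0 ∨ t i < t (i-1) := by
            rw [sigL] at hsl
            simpa using hsl
          rcases hvp with h | h
          · have : i = i' := hvinj i (by omega) i' (by omega) h
            subst this
            exact absurd hlt (lt_irrefl _)
          · have : i = i' + 1 := hvinj i (by omega) (i'+1) (by omega) h
            have hii' : i' = i - 1 := by omega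
            rcases hsl' with h0 | h0
            · omega
            · rw [hii'] at hlt
              have : t (i-1) < t i := hlt
              omega
        have hvc := vertexCost G hacyc R B τ hRG hBG hRB hblue PE hPER (v i) (C i)
          (by rw [hCdef]) (hx0PE i (by omega)) (τ (pe i)) a u hu0 huinj
          (fun k hk => ⟨(hupath k hk).1, (hupath k hk).2⟩) 1 (Or.inl rfl)
          (fun _ => hstrong)
        rw [hsl]
        have hgc : gc true a = a + (a + 2 - 1)/2 := by
          have h1 : gc true a = a + (a + 1) / 2 := rfl
          omega
        rw [hgc]
        exact hvc
      · have hsl' : sigL t i = false := by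
          cases h : sigL t i
          · rfl
          · exact absurd h hsl
        have hvc := vertexCost G hacyc R B τ hRG hBG hRB hblue PE hPER (v i) (C i)
          (by rw [hCdef]) (hx0PE i (by omega)) (τ (pe i)) a u hu0 huinj
          (fun k hk => ⟨(hupath k hk).1, (hupath k hk).2⟩) 2 (Or.inr rfl)
          (fun h => absurd h (by omega))
        rw [hsl']
        have hgc : gc false a = a + (a + 2 - 2)/2 := by
          have h1 : gc false a = a + a / 2 := rfl
          omega
        rw [hgc]
        exact hvc
    · -- bound at v (i+1)
      obtain ⟨u, hu0, huinj, hupath⟩ := hBPb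
      by_cases hsr : sigR t i = true
      · have hstrong : ∀ p ∈ PE, v (i+1) ∈ p → ¬ τ p < τ (pe i) := by
          rintro p ⟨i', hi', rfl⟩ hvp hlt
          have hi'8 : i' < 8 := by simpa using hi'
          rw [hpe, Sym2.mem_iff] at hvp
          have hsr' : i = 7 ∨ t i < t (i+1) := by
            rw [sigR] at hsr
            simpa using hsr
          rcases hvp with h | h
          · have : i + 1 = i' := hvinj (i+1) (by omega) i' (by omega) h
            rcases hsr' with h0 | h0
            · omega
            · rw [← this] at hlt
              have : t (i+1) < t i := hlt
              omega
          · have : i + 1 = i' + 1 := hvinj (i+1) (by omega) (i'+1) (by omega) h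
            have : i = i' := by omega
            subst this
            exact absurd hlt (lt_irrefl _)
        have hvc := vertexCost G hacyc R B τ hRG hBG hRB hblue PE hPER (v (i+1)) (C (i+1))
          (by rw [hCdef]) (hx0PE (i+1) (by omega)) (τ (pe i)) b u hu0 huinj
          (fun k hk => ⟨(hupath k hk).1, (hupath k hk).2⟩) 1 (Or.inl rfl)
          (fun _ => hstrong)
        rw [hsr]
        have hgc : gc true b = b + (b + 2 - 1)/2 := by
          have h1 : gc true b = b + (b + 1) / 2 := rfl
          omega
        rw [hgc]
        exact hvc
      · have hsr' : sigR t i = false := by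
          cases h : sigR t i
          · rfl
          · exact absurd h hsr
        have hvc := vertexCost G hacyc R B τ hRG hBG hRB hblue PE hPER (v (i+1)) (C (i+1))
          (by rw [hCdef]) (hx0PE (i+1) (by omega)) (τ (pe i)) b u hu0 huinj
          (fun k hk => ⟨(hupath k hk).1, (hupath k hk).2⟩) 2 (Or.inr rfl)
          (fun h => absurd h (by omega))
        rw [hsr']
        have hgc : gc false b = b + (b + 2 - 2)/2 := by
          have h1 : gc false b = b + b / 2 := rfl
          omega
        rw [hgc]
        exact hvc
  have harith := arith_main w t sflag ht hcov hdem
  -- counting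
  set Tj : ℕ → Set (Sym2 V) := fun j => G.edgeSet ∩ {e | ∀ z ∈ e, z ∈ C j} with hTjdef
  have hTdisj : ∀ j ≤ 8, ∀ k ≤ 8, j ≠ k → Disjoint (Tj j) (Tj k) := by
    intro j hj k hk hjk
    rw [Set.disjoint_left]
    intro e he1 he2
    obtain ⟨x, hx⟩ := sym2_pick e
    have hxj : x ∈ C j := he1.2 x hx
    have hxk : x ∈ C k := he2.2 x hx
    exact key2 j hj k hk hjk (hxj.trans hxk.symm)
  have hsum : ∀ k ≤ 9, (⋃ j ∈ Finset.range k, Tj j).ncard = ∑ j ∈ Finset.range k, w j := by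
    intro k
    induction k with
    | zero => intro _; simp
    | succ k ih =>
      intro hk
      have hdisjk : Disjoint (Tj k) (⋃ j ∈ Finset.range k, Tj j) := by
        rw [Set.disjoint_left]
        intro e he1 he2
        rw [Set.mem_iUnion₂] at he2
        obtain ⟨j, hj, hej⟩ := he2
        rw [Finset.mem_range] at hj
        exact Set.disjoint_left.mp
          (hTdisj k (by omega) j (by omega) (by omega)) he1 hej
      rw [Finset.range_add_one, Finset.set_biUnion_insert, Finset.sum_insert (by simp),
        Set.ncard_union_eq hdisjk (Set.toFinite _) (Set.toFinite _), ih (by omega)]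
  have hPEcard : PE.ncard = 8 := by
    have hinj : Set.InjOn pe ↑(Finset.range 8) := by
      intro a ha b hb h
      simp only [Finset.coe_range, Set.mem_Iio] at ha hb
      exact hpeinj a (by omega) b (by omega) h
    rw [hPEdef, Set.ncard_image_of_injOn hinj, Set.ncard_coe_finset, Finset.card_range]
  have hPEdisjU : Disjoint PE (⋃ j ∈ Finset.range 9, Tj j) := by
    rw [Set.disjoint_left]
    rintro e ⟨i, hi, rfl⟩ he2
    have hi8 : i < 8 := by simpa using hi
    rw [Set.mem_iUnion₂] at he2
    obtain ⟨j, hj, hej⟩ := he2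
    rw [Finset.mem_range] at hj
    have h1 : v i ∈ C j := hej.2 (v i) (by rw [hpe, Sym2.mem_iff]; left; rfl)
    have h2 : v (i+1) ∈ C j := hej.2 (v (i+1)) (by rw [hpe, Sym2.mem_iff]; right; rfl)
    have e1 := hvC i (by omega) j (by omega) h1
    have e2 := hvC (i+1) (by omega) j (by omega) h2
    omega
  have hsub : PE ∪ (⋃ j ∈ Finset.range 9, Tj j) ⊆ G.edgeSet ∩ {e | ∀ z ∈ e, z ∈ S} := by
    apply Set.union_subset
    · rintro e ⟨i, hi, rfl⟩
      have hi8 : i < 8 := by simpa using hi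
      refine ⟨hpeG i hi8, ?_⟩
      intro z hz
      rw [hpe, Sym2.mem_iff] at hz
      rcases hz with rfl | rfl
      · exact hCS i (by omega) (hCmem i)
      · exact hCS (i+1) (by omega) (hCmem (i+1))
    · intro e he
      rw [Set.mem_iUnion₂] at he
      obtain ⟨j, hj, hej⟩ := he
      rw [Finset.mem_range] at hj
      exact ⟨hej.1, fun z hz => hCS j (by omega) (hej.2 z hz)⟩
  have htotal : (PE ∪ (⋃ j ∈ Finset.range 9, Tj j)).ncard =
      8 + ∑ j ∈ Finset.range 9, w j := by
    rw [Set.ncard_union_eq hPEdisjU (Set.toFinite _) (Set.toFinite _), hPEcard,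
      hsum 9 le_rfl]
  have hle1 : (PE ∪ (⋃ j ∈ Finset.range 9, Tj j)).ncard ≤
      (G.edgeSet ∩ {e | ∀ z ∈ e, z ∈ S}).ncard :=
    Set.ncard_le_ncard hsub (Set.toFinite _)
  have hle2 := hts S hSconn
  have hsum9 : ∑ j ∈ Finset.range 9, w j =
      w 0 + w 1 + w 2 + w 3 + w 4 + w 5 + w 6 + w 7 + w 8 := by
    simp [Finset.sum_range_succ]
  omega



lemma runPainterAux_append {V : Type} {r : ℕ} (π : PainterStrategy V r)
    (l1 l2 : List (Sym2 V)) (h : EdgeHistory V r) :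
    runPainterAux π h (l1 ++ l2) = runPainterAux π (runPainterAux π h l1) l2 := by
  induction l1 generalizing h with
  | nil => rfl
  | cons e es ih =>
    simp only [List.cons_append, runPainterAux]
    exact ih _

lemma runPainter_snoc {V : Type} {r : ℕ} (π : PainterStrategy V r) (l : List (Sym2 V))
    (e : Sym2 V) :
    runPainter π (l ++ [e]) = runPainter π l ++ [(e, π (runPainter π l) e)] := by
  rw [runPainter, runPainter, runPainterAux_append]
  rfl

lemma hist_mem {V : Type} {r : ℕ} (π : PainterStrategy V r) (l : List (Sym2 V)) :
    ∀ t, t ≤ l.length → ∀ e c, ((e, c) ∈ runPainter π (l.take t) ↔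
      ∃ u, ∃ (hu : u < l.length), u < t ∧ l[u] = e ∧
        π (runPainter π (l.take u)) (l[u]) = c) := by
  intro t
  induction t with
  | zero =>
    intro _ e c
    simp [runPainter, runPainterAux]
  | succ t ih =>
    intro ht e c
    have htl : t < l.length := by omega
    have hsnoc : l.take (t+1) = l.take t ++ [l[t]] := (List.take_concat_get' l t htl).symm
    rw [hsnoc, runPainter_snoc]
    constructor
    · intro hm
      rcases List.mem_append.mp hm with hm | hm
      · obtain ⟨u, hu, hut, h1, h2⟩ := (ih (by omega) e c).mp hm
        exact ⟨u, hu, by omega, h1, h2⟩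
      · rw [List.mem_singleton] at hm
        have h1 : e = l[t] := by
          have := congrArg Prod.fst hm
          simpa using this
        have h2 : c = π (runPainter π (l.take t)) (l[t]) := by
          have := congrArg Prod.snd hm
          simpa [h1] using this
        exact ⟨t, htl, by omega, h1.symm, h2.symm⟩
    · rintro ⟨u, hu, hut, h1, h2⟩
      rcases Nat.lt_or_ge u t with h | h
      · exact List.mem_append.mpr (Or.inl ((ih (by omega) e c).mpr ⟨u, hu, h, h1, h2⟩))
      · have hut' : u = t := by omega
        subst hut'
        subst h1
        rw [h2]
        simp


/-- blue graphs stay P9-free -/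
lemma blue_free (n : ℕ) (l : List (Sym2 (Fin n))) (h : EdgeHistory (Fin n) 2)
    (hh : ¬ IsCopy (SimpleGraph.pathGraph 9)
      (SimpleGraph.fromEdgeSet {e | (e, (1 : Fin 2)) ∈ h})) :
    ¬ IsCopy (SimpleGraph.pathGraph 9)
      (SimpleGraph.fromEdgeSet
        {e | (e, (1 : Fin 2)) ∈ runPainterAux (blueIfSafeStrategy 8 n) h l}) := by
  induction l generalizing h with
  | nil => exact hh
  | cons e es ih =>
    rw [runPainterAux]
    apply ih
    by_cases hc : (∃ e', (e', (0 : Fin 2)) ∈ h ∧ ∃ v, v ∈ e ∧ v ∈ e') ∧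
      ¬ IsCopy (SimpleGraph.pathGraph (8 + 1))
        (SimpleGraph.fromEdgeSet (insert e {e' | (e', (1 : Fin 2)) ∈ h}))
    · have hπ : blueIfSafeStrategy 8 n h e = 1 := if_pos hc
      rw [hπ]
      have hset : {e' | (e', (1 : Fin 2)) ∈ h ++ [(e, (1 : Fin 2))]}
          = insert e {e' | (e', (1 : Fin 2)) ∈ h} := by
        ext x
        simp only [Set.mem_setOf_eq, List.mem_append, List.mem_singleton, Prod.mk.injEq,
          Set.mem_insert_iff]
        tauto
      rw [hset]
      exact hc.2
    · have hπ : blueIfSafeStrategy 8 n h e = 0 := if_neg hc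
      rw [hπ]
      have hset : {e' | (e', (1 : Fin 2)) ∈ h ++ [(e, (0 : Fin 2))]}
          = {e' | (e', (1 : Fin 2)) ∈ h} := by
        ext x
        simp only [Set.mem_setOf_eq, List.mem_append, List.mem_singleton, Prod.mk.injEq]
        constructor
        · rintro (hx | ⟨hx, hc01⟩)
          · exact hx
          · exact absurd hc01.symm (by decide)
        · exact fun hx => Or.inl hx
      rw [hset]
      exact hh

lemma main_avoid (n : ℕ) :
    PainterAvoidsTree (SimpleGraph.pathGraph 9) 2 38 n (blueIfSafeStrategy 8 n) := by
  classical
  rintro l ⟨hnd, hdiag⟩ htree ⟨c, hcopy⟩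
  set π := blueIfSafeStrategy 8 n with hπ
  have hbluefreeH : ¬ IsCopy (SimpleGraph.pathGraph 9)
      (SimpleGraph.fromEdgeSet {e | (e, (1 : Fin 2)) ∈ runPainter π l}) := by
    exact blue_free n l [] (by
      simp only [List.not_mem_nil, Set.setOf_false]
      rintro ⟨f, hf⟩
      have := hf 0 1 (by simp [SimpleGraph.pathGraph_adj])
      simp at this)
  have hmemH : ∀ (e : Sym2 (Fin n)) (cc : Fin 2), ((e, cc) ∈ runPainter π l ↔
      ∃ u, ∃ (hu : u < l.length), u < l.length ∧ l[u] = e ∧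
        π (runPainter π (l.take u)) (l[u]) = cc) := by
    intro e cc
    have := hist_mem π l l.length le_rfl e cc
    rwa [l.take_length] at this
  have hidx : ∀ u (hu : u < l.length), l.idxOf (l[u]) = u := by
    intro u hu
    have h1 : l[u] ∈ l := List.getElem_mem hu
    have h2 : l.idxOf (l[u]) < l.length := List.idxOf_lt_length_iff.mpr h1
    exact (List.Nodup.getElem_inj_iff hnd).mp (List.getElem_idxOf h2)
  have hmeml : ∀ (x : Sym2 (Fin n)) (cx : Fin 2), (x, cx) ∈ runPainter π l → x ∈ l := by
    intro x cx hx
    obtain ⟨u, hu, _, h1, _⟩ := (hmemH x cx).mp hx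
    rw [← h1]
    exact List.getElem_mem hu
  have hcol : ∀ u (hu : u < l.length),
      (π (runPainter π (l.take u)) l[u] = 1 ↔
        ((∃ e', (e', (0:Fin 2)) ∈ runPainter π (l.take u) ∧ ∃ z, z ∈ l[u] ∧ z ∈ e') ∧
         ¬ IsCopy (SimpleGraph.pathGraph (8+1))
           (SimpleGraph.fromEdgeSet
             (insert l[u] {e' | (e', (1:Fin 2)) ∈ runPainter π (l.take u)})))) := by
    intro u hu
    constructor
    · intro h
      by_cases hc : (∃ e', (e', (0:Fin 2)) ∈ runPainter π (l.take u) ∧ ∃ z, z ∈ l[u] ∧ z ∈ e') ∧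
         ¬ IsCopy (SimpleGraph.pathGraph (8+1))
           (SimpleGraph.fromEdgeSet
             (insert l[u] {e' | (e', (1:Fin 2)) ∈ runPainter π (l.take u)}))
      · exact hc
      · rw [hπ] at h
        have : blueIfSafeStrategy 8 n (runPainter π (l.take u)) l[u] = 0 := if_neg hc
        rw [hπ] at this
        rw [this] at h
        exact absurd h (by decide)
    · intro hc
      rw [hπ]
      exact if_pos hc
  fin_cases c
  · -- red case
    have htree' := htree l.length
    rw [l.take_length] at htree'
    apply S13.static (boardOf l) htree'.1 htree'.2
      {e | (e, (0:Fin 2)) ∈ runPainter π l} {e | (e, (1:Fin 2)) ∈ runPainter π l}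
      (fun e => l.idxOf e) ?_ ?_ ?_ ?_ ?_ hbluefreeH ?_ hcopy
    · -- hRG
      intro e he
      obtain ⟨u, hu, _, h1, _⟩ := (hmemH e 0).mp he
      show e ∈ (SimpleGraph.fromEdgeSet {e | e ∈ l}).edgeSet
      rw [SimpleGraph.edgeSet_fromEdgeSet]
      have hel : e ∈ l := by rw [← h1]; exact List.getElem_mem hu
      exact ⟨hel, fun hd => hdiag e hel hd⟩
    · -- hBG
      intro e he
      obtain ⟨u, hu, _, h1, _⟩ := (hmemH e 1).mp he
      show e ∈ (SimpleGraph.fromEdgeSet {e | e ∈ l}).edgeSet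
      rw [SimpleGraph.edgeSet_fromEdgeSet]
      have hel : e ∈ l := by rw [← h1]; exact List.getElem_mem hu
      exact ⟨hel, fun hd => hdiag e hel hd⟩
    · -- hRB
      rw [Set.disjoint_left]
      intro e h0 h1
      obtain ⟨u1, hu1, _, h1a, h1b⟩ := (hmemH e 0).mp h0
      obtain ⟨u2, hu2, _, h2a, h2b⟩ := (hmemH e 1).mp h1
      have : u1 = u2 := (List.Nodup.getElem_inj_iff hnd).mp (h1a.trans h2a.symm)
      subst this
      rw [h1b] at h2b
      exact absurd h2b (by decide)
    · -- hτ InjOn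
      intro e he e' he' heq
      have hel : e ∈ l := by
        rcases he with h | h
        · exact hmeml e 0 h
        · exact hmeml e 1 h
      have hel' : e' ∈ l := by
        rcases he' with h | h
        · exact hmeml e' 0 h
        · exact hmeml e' 1 h
      have h1 : l[l.idxOf e]? = some e := List.getElem?_idxOf hel
      have h2 : l[l.idxOf e']? = some e' := List.getElem?_idxOf hel'
      simp only at heq
      rw [heq] at h1
      exact Option.some.inj (h1.symm.trans h2)
    · -- hblue
      intro e heB
      obtain ⟨u, hu, _, h1, h2⟩ := (hmemH e 1).mp heB
      obtain ⟨⟨e', he'0, z, hz1, hz2⟩, _⟩ := (hcol u hu).mp h2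
      obtain ⟨u', hu', hu'u, h1', h2'⟩ := (hist_mem π l u (by omega) e' 0).mp he'0
      refine ⟨e', (hmemH e' 0).mpr ⟨u', hu', by omega, h1', h2'⟩, ?_, z, ?_, hz2⟩
      · rw [← h1, hidx u hu, ← h1', hidx u' hu']
        exact hu'u
      · rw [h1] at hz1
        exact hz1
    · -- hred
      intro e heR
      obtain ⟨u, hu, _, h1, h2⟩ := (hmemH e 0).mp heR
      subst h1
      by_cases hA : (∃ e', (e', (0:Fin 2)) ∈ runPainter π (l.take u) ∧
          ∃ z, z ∈ l[u] ∧ z ∈ e')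
      · right
        have hcopy3 : IsCopy (SimpleGraph.pathGraph (8+1))
            (SimpleGraph.fromEdgeSet
              (insert l[u] {e' | (e', (1:Fin 2)) ∈ runPainter π (l.take u)})) := by
          by_contra hnc
          have hone := (hcol u hu).mpr ⟨hA, hnc⟩
          rw [h2] at hone
          exact absurd hone (by decide)
        have hsetB : {e' | (e', (1:Fin 2)) ∈ runPainter π (l.take u)} =
            {b | b ∈ {e | (e, (1:Fin 2)) ∈ runPainter π l} ∧
              l.idxOf b < l.idxOf (l[u])} := by
          ext e'
          simp only [Set.mem_setOf_eq]
          constructor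
          · intro hm
            obtain ⟨u', hu', hu'u, h1', h2'⟩ := (hist_mem π l u (by omega) e' 1).mp hm
            refine ⟨(hmemH e' 1).mpr ⟨u', hu', by omega, h1', h2'⟩, ?_⟩
            rw [hidx u hu, ← h1', hidx u' hu']
            exact hu'u
          · rintro ⟨hmB, hlt⟩
            obtain ⟨u', hu', _, h1', h2'⟩ := (hmemH e' 1).mp hmB
            apply (hist_mem π l u (by omega) e' 1).mpr
            refine ⟨u', hu', ?_, h1', h2'⟩
            rw [hidx u hu, ← h1', hidx u' hu'] at hlt
            exact hlt
        rw [hsetB] at hcopy3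
        exact hcopy3
      · left
        rintro ⟨e', he'R, hlt, z, hz1, hz2⟩
        apply hA
        obtain ⟨u', hu', _, h1', h2'⟩ := (hmemH e' 0).mp he'R
        refine ⟨e', ?_, z, hz1, hz2⟩
        apply (hist_mem π l u (by omega) e' 0).mpr
        refine ⟨u', hu', ?_, h1', h2'⟩
        rw [hidx u hu, ← h1', hidx u' hu'] at hlt
        exact hlt
  · -- blue case
    exact hbluefreeH hcopy

end S13

/-- Painter has a winning strategy in the deterministic `P_8`-avoidance
game with 2 colors and tree size restriction 38 — namely the strategy that colors an edge
blue iff it is adjacent to a red edge and does not complete a blue `P_8` — and consequently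
every tree size restriction for which Builder wins is at least 39, i.e. `k*(P_8,2) ≥ 39`. -/
theorem statement13 :
    (∀ n : ℕ, PainterAvoidsTree (SimpleGraph.pathGraph 9) 2 38 n (blueIfSafeStrategy 8 n)) ∧
    PainterWinsTree (SimpleGraph.pathGraph 9) 2 38 ∧
    (∀ k : ℕ, BuilderWinsTree (SimpleGraph.pathGraph 9) 2 k → 39 ≤ k) := by
  refine ⟨S13.main_avoid, fun a => ⟨_, S13.main_avoid a⟩, ?_⟩
  intro k hk
  by_contra hlt
  push_neg at hlt
  obtain ⟨a, hB⟩ := hk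
  obtain ⟨l, hval, htree, hmono⟩ := hB (blueIfSafeStrategy 8 a)
  exact S13.main_avoid a l hval
    (fun i => ⟨(htree i).1, fun S hS => le_trans ((htree i).2 S hS) (by omega)⟩) hmono
end

section
/- Fix an integer k ≥ 1. For every function N : ℕ → ℕ with N(n) = o(n^{1−1/k}), the probability that the uniformly random graph on n vertices with exactly N(n) edges has the property that every connected component is a tree with at most k−1 edges (equivalently, the graph contains no cycle and no subgraph that is a tree with k edges) tends to 1 as n → ∞. -/
open SimpleGraph Filter Asymptotics
open scoped Classical

/-- The probability of the event `P` for the uniformly random graph on `n` vertices with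
exactly `N` edges (a uniformly random set of `N` non-loop vertex pairs). -/
noncomputable def graphProb (n N : ℕ) (P : SimpleGraph (Fin n) → Prop) : ℝ :=
  (Set.ncard {E : Finset (Sym2 (Fin n)) |
      (E.card = N ∧ ∀ e ∈ E, ¬ e.IsDiag) ∧ P (SimpleGraph.fromEdgeSet ↑E)} : ℝ) /
  (Set.ncard {E : Finset (Sym2 (Fin n)) | E.card = N ∧ ∀ e ∈ E, ¬ e.IsDiag} : ℝ)


section Helpers

variable {W V : Type} [Fintype W] [Fintype V]

/-- vertex support of a finite set of edges -/
noncomputable def esupp (F : Finset (Sym2 W)) : Finset W :=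
  Finset.univ.filter (fun v => ∃ e ∈ F, v ∈ e)

lemma mem_esupp {F : Finset (Sym2 W)} {v : W} : v ∈ esupp F ↔ ∃ e ∈ F, v ∈ e := by
  simp [esupp]

lemma esupp_mono {F F' : Finset (Sym2 W)} (h : F ⊆ F') : esupp F ⊆ esupp F' := by
  intro v hv; rw [mem_esupp] at *; obtain ⟨e, he, hve⟩ := hv; exact ⟨e, h he, hve⟩

lemma esupp_insert (a b : W) (F : Finset (Sym2 W)) :
    esupp (insert s(a,b) F) ⊆ insert a (insert b (esupp F)) := by
  intro v hv
  rw [mem_esupp] at hv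
  obtain ⟨e, he, hve⟩ := hv
  rcases Finset.mem_insert.mp he with rfl | he
  · rcases Sym2.mem_iff.mp hve with rfl | rfl <;> simp
  · simp [Finset.mem_insert, mem_esupp]; right; right; exact ⟨e, he, hve⟩

/-- first crossing into a set along a walk -/
lemma exists_crossing {G : SimpleGraph W} {u v : W} (p : G.Walk u v) (T : Finset W)
    (hu : u ∉ T) (hv : v ∈ T) : ∃ a b, G.Adj a b ∧ a ∉ T ∧ b ∈ T := by
  induction p with
  | nil => exact absurd hv hu
  | @cons x y z hadj q ih =>
    by_cases hy : y ∈ T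
    · exact ⟨x, y, hadj, hu, hy⟩
    · exact ih hy hv

/-- connected graph with ≥ k edges contains k edges spanning ≤ k+1 vertices -/
lemma abs_extract (G : SimpleGraph W) (hc : G.Connected) (k : ℕ)
    (hk : k ≤ G.edgeFinset.card) :
    ∃ F : Finset (Sym2 W), F ⊆ G.edgeFinset ∧ F.card = k ∧ (esupp F).card ≤ k + 1 := by
  induction k with
  | zero => exact ⟨∅, by simp, by simp, by simp [esupp]⟩
  | succ k ih =>
    obtain ⟨F, hFsub, hFcard, hFsupp⟩ := ih (le_trans (Nat.le_succ k) hk)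
    -- F is a proper subset: pick e₀ outside
    have hlt : F.card < G.edgeFinset.card := hFcard ▸ hk
    have hns : ¬ G.edgeFinset ⊆ F := fun hsub => absurd (Finset.card_le_card hsub) (by omega)
    obtain ⟨e₀, he₀G, he₀F⟩ := Finset.not_subset.mp hns
    rcases Nat.eq_zero_or_pos k with rfl | hkpos
    · -- base: F = ∅, take e₀
      refine ⟨{e₀}, by simpa using he₀G, by simp, ?_⟩
      induction e₀ using Sym2.ind with
      | _ a b =>
        calc (esupp {s(a,b)}).card ≤ (insert a (insert b (esupp (∅ : Finset (Sym2 W))))).card := by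
              apply Finset.card_le_card
              simpa using esupp_insert a b ∅
          _ ≤ 2 := by
              apply le_trans (Finset.card_insert_le _ _)
              simp [esupp]
    · -- k ≥ 1: F nonempty, get a touching edge
      have hFne : F.Nonempty := Finset.card_pos.mp (hFcard ▸ hkpos)
      obtain ⟨e₁, he₁⟩ := hFne
      -- get a vertex in esupp F
      have hsuppne : (esupp F).Nonempty := by
        induction e₁ using Sym2.ind with
        | _ a b => exact ⟨a, mem_esupp.mpr ⟨s(a,b), he₁, by simp⟩⟩
      obtain ⟨u, hu⟩ := hsuppne
      -- find an edge of G not in F touching esupp F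
      have key : ∃ a b, G.Adj a b ∧ s(a,b) ∉ F ∧ b ∈ esupp F := by
        induction e₀ using Sym2.ind with
        | _ x y =>
          have hxy : G.Adj x y := by
            rw [SimpleGraph.mem_edgeFinset, SimpleGraph.mem_edgeSet] at he₀G; exact he₀G
          by_cases hx : x ∈ esupp F
          · exact ⟨y, x, hxy.symm, by rwa [Sym2.eq_swap], hx⟩
          · by_cases hy : y ∈ esupp F
            · exact ⟨x, y, hxy, he₀F, hy⟩
            · obtain ⟨a, b, hab, ha, hb⟩ := exists_crossing ((hc.preconnected x u).some) (esupp F) hx hu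
              refine ⟨a, b, hab, ?_, hb⟩
              intro hmem
              exact ha (mem_esupp.mpr ⟨s(a,b), hmem, by simp⟩)
      obtain ⟨a, b, hab, habF, hb⟩ := key
      refine ⟨insert s(a,b) F, ?_, ?_, ?_⟩
      · intro e he
        rcases Finset.mem_insert.mp he with rfl | he
        · rwa [SimpleGraph.mem_edgeFinset, SimpleGraph.mem_edgeSet]
        · exact hFsub he
      · rw [Finset.card_insert_of_notMem habF, hFcard]
      · calc (esupp (insert s(a,b) F)).card
            ≤ (insert a (insert b (esupp F))).card :=
              Finset.card_le_card (esupp_insert a b F)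
          _ ≤ (insert b (esupp F)).card + 1 := Finset.card_insert_le _ _
          _ = (esupp F).card + 1 := by rw [Finset.insert_eq_self.mpr hb]
          _ ≤ (k + 1) + 1 := by omega


-- image under injective map
lemma esupp_image (f : W → V) (hf : Function.Injective f) (F : Finset (Sym2 W)) :
    esupp (F.image (Sym2.map f)) ⊆ (esupp F).image f := by
  intro v hv
  rw [mem_esupp] at hv
  obtain ⟨e, he, hve⟩ := hv
  obtain ⟨e', he', rfl⟩ := Finset.mem_image.mp he
  obtain ⟨a, ha, rfl⟩ := Sym2.mem_map.mp hve
  exact Finset.mem_image.mpr ⟨a, mem_esupp.mpr ⟨e', he', ha⟩, rfl⟩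

-- subgraph version of abs_extract
lemma subgraph_extract {G : SimpleGraph V} (H : G.Subgraph) (hc : H.Connected) (k : ℕ)
    (hk : k ≤ H.edgeSet.ncard) :
    ∃ F : Finset (Sym2 V), (↑F : Set (Sym2 V)) ⊆ H.edgeSet ∧ F.card = k ∧
      (esupp F).card ≤ k + 1 := by
  have himg : H.edgeSet = (Sym2.map (Subtype.val : H.verts → V)) '' H.coe.edgeSet := by
    ext e
    constructor
    · intro he
      induction e using Sym2.ind with
      | _ x y =>
        have hadj : H.Adj x y := (SimpleGraph.Subgraph.mem_edgeSet).mp he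
        have hx : x ∈ H.verts := H.edge_vert hadj
        have hy : y ∈ H.verts := H.edge_vert hadj.symm
        exact ⟨s(⟨x, hx⟩, ⟨y, hy⟩), (SimpleGraph.Subgraph.mem_edgeSet).mpr hadj, rfl⟩
    · rintro ⟨e', he', rfl⟩
      induction e' using Sym2.ind with
      | _ a b =>
        exact (SimpleGraph.Subgraph.mem_edgeSet).mpr ((SimpleGraph.Subgraph.coe_adj H a b).mp
          ((SimpleGraph.mem_edgeSet H.coe).mp he'))
  have hinj : Function.Injective (Sym2.map (Subtype.val : H.verts → V)) :=
    Sym2.map.injective Subtype.val_injective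
  have hcard : H.coe.edgeSet.ncard = H.edgeSet.ncard := by
    rw [himg, Set.ncard_image_of_injective _ hinj]
  have hk' : k ≤ H.coe.edgeFinset.card := by
    rw [← Set.ncard_coe_finset, SimpleGraph.coe_edgeFinset, hcard]; exact hk
  obtain ⟨F', hF'sub, hF'card, hF'supp⟩ := abs_extract H.coe hc.coe k hk'
  refine ⟨F'.image (Sym2.map Subtype.val), ?_, ?_, ?_⟩
  · intro e he
    obtain ⟨e', he', rfl⟩ := Finset.mem_image.mp (by exact_mod_cast he)
    rw [himg]
    exact ⟨e', SimpleGraph.mem_edgeFinset.mp (hF'sub he'), rfl⟩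
  · rw [Finset.card_image_of_injective _ hinj, hF'card]
  · calc (esupp (F'.image (Sym2.map Subtype.val))).card
        ≤ ((esupp F').image Subtype.val).card :=
          Finset.card_le_card (esupp_image _ Subtype.val_injective F')
      _ ≤ (esupp F').card := Finset.card_image_le
      _ ≤ k + 1 := hF'supp

lemma cycle_edges_extract {n : ℕ} {G : SimpleGraph (Fin n)} {v : Fin n} {p : G.Walk v v}
    (hp : p.IsCycle) :
    ∃ F : Finset (Sym2 (Fin n)), (↑F : Set (Sym2 (Fin n))) ⊆ G.edgeSet ∧
      F.card = p.length ∧ (esupp F).card ≤ p.length := by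
  refine ⟨p.edges.toFinset, ?_, ?_, ?_⟩
  · intro e he
    exact p.edges_subset_edgeSet (by simpa using he)
  · rw [List.toFinset_card_of_nodup hp.edges_nodup, p.length_edges]
  · -- support bound
    have h3 := hp.three_le_length
    cases p with
    | nil => simp at h3
    | cons hadj q =>
      rename_i w
      have hsub : esupp (SimpleGraph.Walk.cons hadj q).edges.toFinset ⊆ q.support.toFinset := by
        intro x hx
        rw [mem_esupp] at hx
        obtain ⟨e, he, hxe⟩ := hx
        rw [List.mem_toFinset] at he
        have hxsupp : x ∈ (SimpleGraph.Walk.cons hadj q).support := by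
          induction e using Sym2.ind with
          | _ a b =>
            rcases Sym2.mem_iff.mp hxe with rfl | rfl
            · exact SimpleGraph.Walk.fst_mem_support_of_mem_edges _ he
            · exact SimpleGraph.Walk.snd_mem_support_of_mem_edges _ he
        rw [SimpleGraph.Walk.support_cons, List.mem_cons] at hxsupp
        rw [List.mem_toFinset]
        rcases hxsupp with rfl | hx'
        · exact q.end_mem_support
        · exact hx'
      have hnodup : q.support.Nodup := by
        have := hp.support_nodup
        rwa [SimpleGraph.Walk.support_cons, List.tail_cons] at this
      calc (esupp (SimpleGraph.Walk.cons hadj q).edges.toFinset).card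
          ≤ q.support.toFinset.card := Finset.card_le_card hsub
        _ = q.support.length := List.toFinset_card_of_nodup hnodup
        _ = (SimpleGraph.Walk.cons hadj q).length := by
            rw [SimpleGraph.Walk.length_support]
            simp

lemma bad_extract {n k : ℕ} (hk : 1 ≤ k) (E : Finset (Sym2 (Fin n)))
    (hbad : ¬ TreeSizeLE (SimpleGraph.fromEdgeSet (↑E : Set (Sym2 (Fin n)))) (k-1)) :
    ∃ F : Finset (Sym2 (Fin n)), F ⊆ E ∧
      ((1 ≤ F.card ∧ F.card ≤ k ∧ (esupp F).card ≤ F.card) ∨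
       (F.card = k ∧ (esupp F).card ≤ k + 1)) := by
  set G := SimpleGraph.fromEdgeSet (↑E : Set (Sym2 (Fin n))) with hG
  have hGE : G.edgeSet ⊆ (↑E : Set (Sym2 (Fin n))) := by
    rw [hG, SimpleGraph.edgeSet_fromEdgeSet]; exact Set.diff_subset
  rw [TreeSizeLE, not_and_or] at hbad
  -- helper applying subgraph_extract
  have fromSub : ∀ H : G.Subgraph, H.Connected → k ≤ H.edgeSet.ncard →
      ∃ F : Finset (Sym2 (Fin n)), F ⊆ E ∧
        ((1 ≤ F.card ∧ F.card ≤ k ∧ (esupp F).card ≤ F.card) ∨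
         (F.card = k ∧ (esupp F).card ≤ k + 1)) := by
    intro H hc hcard
    obtain ⟨F, hF1, hF2, hF3⟩ := subgraph_extract H hc k hcard
    refine ⟨F, ?_, Or.inr ⟨hF2, hF3⟩⟩
    intro e he
    have : e ∈ G.edgeSet := H.edgeSet_subset (hF1 (by simpa using he))
    simpa using hGE this
  rcases hbad with hcyc | hS
  · rw [SimpleGraph.IsAcyclic] at hcyc
    push_neg at hcyc
    obtain ⟨v, p, hp⟩ := hcyc
    by_cases hlen : p.length ≤ k
    · obtain ⟨F, hF1, hF2, hF3⟩ := cycle_edges_extract hp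
      refine ⟨F, fun e he => by simpa using hGE (hF1 (by simpa using he)), Or.inl ?_⟩
      refine ⟨?_, by omega, by omega⟩
      have := hp.three_le_length
      omega
    · refine fromSub p.toSubgraph p.toSubgraph_connected ?_
      have : p.toSubgraph.edgeSet = (↑p.edges.toFinset : Set (Sym2 (Fin n))) := by
        rw [p.edgeSet_toSubgraph]; ext e; simp
      rw [this, Set.ncard_coe_finset, List.toFinset_card_of_nodup hp.edges_nodup,
        p.length_edges]
      omega
  · push_neg at hS
    obtain ⟨S, hconn, hcount⟩ := hS
    have hcount' : k ≤ edgesWithin G S := by omega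
    set H : G.Subgraph := (⊤ : G.Subgraph).induce S with hH
    have hHconn : H.Connected := by
      rw [SimpleGraph.Subgraph.connected_iff']
      rw [SimpleGraph.induce_eq_coe_induce_top] at hconn
      exact hconn
    have hHedge : H.edgeSet = G.edgeSet ∩ {e | ∀ v ∈ e, v ∈ S} := by
      ext e
      induction e using Sym2.ind with
      | _ a b =>
        simp only [SimpleGraph.Subgraph.mem_edgeSet, hH, SimpleGraph.Subgraph.induce_adj,
          SimpleGraph.Subgraph.top_adj, Set.mem_inter_iff, Set.mem_setOf_eq,
          SimpleGraph.mem_edgeSet, Sym2.mem_iff]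
        constructor
        · rintro ⟨ha, hb, hadj⟩
          exact ⟨hadj, fun v hv => by rcases hv with rfl | rfl <;> assumption⟩
        · rintro ⟨hadj, hv⟩
          exact ⟨hv a (Or.inl rfl), hv b (Or.inr rfl), hadj⟩
    refine fromSub H hHconn ?_
    rw [hHedge]
    exact hcount'

noncomputable def allE (n : ℕ) : Finset (Sym2 (Fin n)) :=
  Finset.univ.filter (fun e => ¬ e.IsDiag)

lemma card_allE (n : ℕ) : (allE n).card = n.choose 2 := by
  rw [allE, ← Fintype.card_subtype, Sym2.card_subtype_not_diag, Fintype.card_fin]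

lemma mem_powAllE {n N : ℕ} {E : Finset (Sym2 (Fin n))} :
    E ∈ (allE n).powersetCard N ↔ E.card = N ∧ ∀ e ∈ E, ¬ e.IsDiag := by
  rw [Finset.mem_powersetCard]
  constructor
  · rintro ⟨hsub, hcard⟩
    exact ⟨hcard, fun e he => by simpa [allE] using hsub he⟩
  · rintro ⟨hcard, hdiag⟩
    exact ⟨fun e he => by simp [allE, hdiag e he], hcard⟩

lemma graphProb_eq (n N : ℕ) (P : SimpleGraph (Fin n) → Prop) :
    graphProb n N P =
      ((((allE n).powersetCard N).filter
        (fun E : Finset (Sym2 (Fin n)) => P (SimpleGraph.fromEdgeSet (↑E : Set (Sym2 (Fin n)))))).card : ℝ) /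
        (((n.choose 2).choose N : ℕ) : ℝ) := by
  rw [graphProb]
  congr 1
  · have : {E : Finset (Sym2 (Fin n)) |
        (E.card = N ∧ ∀ e ∈ E, ¬ e.IsDiag) ∧ P (SimpleGraph.fromEdgeSet ↑E)} =
        ↑(((allE n).powersetCard N).filter
          (fun E : Finset (Sym2 (Fin n)) => P (SimpleGraph.fromEdgeSet (↑E : Set (Sym2 (Fin n)))))) := by
      ext E; simp only [Set.mem_setOf_eq, Finset.coe_filter, mem_powAllE]
    rw [this, Set.ncard_coe_finset]
  · have : {E : Finset (Sym2 (Fin n)) | E.card = N ∧ ∀ e ∈ E, ¬ e.IsDiag} =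
        ↑((allE n).powersetCard N) := by
      ext E; simp only [Set.mem_setOf_eq, Finset.mem_coe, mem_powAllE]
    rw [this, Set.ncard_coe_finset, Finset.card_powersetCard, card_allE]

lemma count_superset {n : ℕ} (N : ℕ) (F : Finset (Sym2 (Fin n))) (hF : F ⊆ allE n) :
    (((allE n).powersetCard N).filter (fun E => F ⊆ E)).card ≤
      if F.card ≤ N then ((allE n).card - F.card).choose (N - F.card) else 0 := by
  split_ifs with h
  · calc (((allE n).powersetCard N).filter (fun E => F ⊆ E)).card
        ≤ ((allE n \ F).powersetCard (N - F.card)).card := by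
          apply Finset.card_le_card_of_injOn (fun E => E \ F)
          · intro E hE
            rw [Finset.mem_coe, Finset.mem_filter, Finset.mem_powersetCard] at hE
            obtain ⟨⟨hsub, hcard⟩, hFE⟩ := hE
            rw [Finset.mem_coe, Finset.mem_powersetCard]
            exact ⟨Finset.sdiff_subset_sdiff hsub (le_refl F),
              by rw [Finset.card_sdiff_of_subset hFE, hcard]⟩
          · intro E1 h1 E2 h2 heq
            rw [Finset.coe_filter, Set.mem_setOf_eq] at h1 h2
            have e1 : E1 = E1 \ F ∪ F := (Finset.sdiff_union_of_subset h1.2).symm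
            have e2 : E2 = E2 \ F ∪ F := (Finset.sdiff_union_of_subset h2.2).symm
            have heq' : E1 \ F = E2 \ F := heq
            rw [e1, e2, heq']
      _ = ((allE n).card - F.card).choose (N - F.card) := by
          rw [Finset.card_powersetCard, Finset.card_sdiff_of_subset hF]
  · have : ((allE n).powersetCard N).filter (fun E => F ⊆ E) = ∅ := by
      apply Finset.eq_empty_of_forall_notMem
      intro E hE
      rw [Finset.mem_filter, Finset.mem_powersetCard] at hE
      exact h (hE.1.2 ▸ Finset.card_le_card hE.2)
    simp [this]

noncomputable def pairsIn (n : ℕ) (S : Finset (Fin n)) : Finset (Sym2 (Fin n)) :=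
  Finset.univ.filter (fun e => ∀ v ∈ e, v ∈ S)

lemma card_pairsIn (n : ℕ) (S : Finset (Fin n)) : (pairsIn n S).card ≤ S.card * S.card := by
  have := Finset.card_le_card_of_injOn (fun e : Sym2 (Fin n) => ((Quot.out e).1, (Quot.out e).2))
    (s := pairsIn n S) (t := S ×ˢ S) ?_ ?_
  · simpa [Finset.card_product] using this
  · intro e he
    rw [pairsIn, Finset.mem_coe, Finset.mem_filter] at he
    exact Finset.mem_product.mpr ⟨he.2 _ (Sym2.out_fst_mem e), he.2 _ (Sym2.out_snd_mem e)⟩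
  · intro e1 _ e2 _ heq
    simp only [Prod.mk.injEq] at heq
    have : Quot.out e1 = Quot.out e2 := Prod.ext heq.1 heq.2
    rw [← Quot.out_eq e1, ← Quot.out_eq e2, this]

lemma wit_count {n : ℕ} (m j : ℕ) (hj : j ≤ n) :
    ((((allE n).powersetCard m).filter (fun F => (esupp F).card ≤ j))).card ≤
      n.choose j * 2 ^ (j * j) := by
  have hsub : (((allE n).powersetCard m).filter (fun F => (esupp F).card ≤ j)) ⊆
      (Finset.univ.powersetCard j).biUnion (fun S => (pairsIn n S).powerset) := by
    intro F hF
    rw [Finset.mem_filter] at hF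
    obtain ⟨S, hSsup, hScard⟩ := Finset.exists_superset_card_eq hF.2 (by simpa using hj)
    rw [Finset.mem_biUnion]
    refine ⟨S, by rw [Finset.mem_powersetCard]; exact ⟨Finset.subset_univ S, hScard⟩, ?_⟩
    rw [Finset.mem_powerset]
    intro e he
    rw [pairsIn, Finset.mem_filter]
    exact ⟨Finset.mem_univ e, fun v hv => hSsup (mem_esupp.mpr ⟨e, he, hv⟩)⟩
  calc (((allE n).powersetCard m).filter (fun F => (esupp F).card ≤ j)).card
      ≤ ((Finset.univ.powersetCard j).biUnion (fun S => (pairsIn n S).powerset)).card :=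
        Finset.card_le_card hsub
    _ ≤ ∑ S ∈ Finset.univ.powersetCard j, ((pairsIn n S).powerset).card :=
        Finset.card_biUnion_le
    _ ≤ (Finset.univ.powersetCard j).card • (2 ^ (j * j)) := by
        apply Finset.sum_le_card_nsmul
        intro S hS
        rw [Finset.mem_powersetCard] at hS
        rw [Finset.card_powerset]
        apply pow_le_pow_right₀ (by norm_num)
        calc (pairsIn n S).card ≤ S.card * S.card := card_pairsIn n S
          _ = j * j := by rw [hS.2]
    _ = n.choose j * 2 ^ (j * j) := by
        rw [Finset.card_powersetCard, Finset.card_univ, Fintype.card_fin, smul_eq_mul]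

lemma choose_ratio {M N : ℕ} (hN : N ≤ M) :
    ∀ m, m ≤ N → (M - m).choose (N - m) * (M - m) ^ m ≤ M.choose N * N ^ m := by
  intro m
  induction m with
  | zero => simp
  | succ m ih =>
    intro hm
    have ih' := ih (by omega)
    set a := M - m with ha
    set b := N - m with hb
    have hb1 : 1 ≤ b := by omega
    have hab : b ≤ a := by omega
    have ha1 : 1 ≤ a := by omega
    have key : a * (a - 1).choose (b - 1) = a.choose b * b := by
      have := Nat.add_one_mul_choose_eq (a - 1) (b - 1)
      rwa [Nat.sub_add_cancel ha1, Nat.sub_add_cancel hb1] at this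
    have step1 : M - (m + 1) = a - 1 := by omega
    have step2 : N - (m + 1) = b - 1 := by omega
    rw [step1, step2]
    calc (a - 1).choose (b - 1) * (a - 1) ^ (m + 1)
        ≤ (a - 1).choose (b - 1) * ((a - 1) * a ^ m) := by
          apply Nat.mul_le_mul_left
          rw [pow_succ, mul_comm ((a-1)^m) (a-1)]
          exact Nat.mul_le_mul_left _ (Nat.pow_le_pow_left (by omega) m)
      _ ≤ (a - 1).choose (b - 1) * (a * a ^ m) := by
          exact Nat.mul_le_mul_left _ (Nat.mul_le_mul_right _ (by omega))
      _ = (a * (a - 1).choose (b - 1)) * a ^ m := by ring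
      _ = (a.choose b * b) * a ^ m := by rw [key]
      _ ≤ (a.choose b * a ^ m) * N := by
          rw [mul_comm (a.choose b) b, mul_assoc]
          calc b * (a.choose b * a ^ m) ≤ N * (a.choose b * a ^ m) :=
                Nat.mul_le_mul_right _ (by omega)
            _ = (a.choose b * a ^ m) * N := by ring
      _ ≤ (M.choose N * N ^ m) * N := Nat.mul_le_mul_right N ih'
      _ = M.choose N * N ^ (m + 1) := by ring


lemma badcount {n k : ℕ} (N : ℕ) (hk : 1 ≤ k) (hkn : k + 1 ≤ n) :
    ((((allE n).powersetCard N).filter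
      (fun E : Finset (Sym2 (Fin n)) =>
        ¬ TreeSizeLE (SimpleGraph.fromEdgeSet (↑E : Set (Sym2 (Fin n)))) (k-1))).card)
    ≤ (∑ m ∈ Finset.Icc 1 k, n.choose m * 2 ^ (m*m) *
        (if m ≤ N then ((allE n).card - m).choose (N - m) else 0))
      + n.choose (k+1) * 2 ^ ((k+1)*(k+1)) *
        (if k ≤ N then ((allE n).card - k).choose (N - k) else 0) := by
  classical
  set cnt : Finset (Sym2 (Fin n)) → Finset (Finset (Sym2 (Fin n))) :=
    fun F => ((allE n).powersetCard N).filter (fun E => F ⊆ E) with hcnt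
  set witA : ℕ → Finset (Finset (Sym2 (Fin n))) :=
    fun m => ((allE n).powersetCard m).filter (fun F => (esupp F).card ≤ m) with hwitA
  set witB : Finset (Finset (Sym2 (Fin n))) :=
    ((allE n).powersetCard k).filter (fun F => (esupp F).card ≤ k + 1) with hwitB
  have hsub : (((allE n).powersetCard N).filter
      (fun E : Finset (Sym2 (Fin n)) =>
        ¬ TreeSizeLE (SimpleGraph.fromEdgeSet (↑E : Set (Sym2 (Fin n)))) (k-1)))
      ⊆ ((Finset.Icc 1 k).biUnion (fun m => (witA m).biUnion cnt)) ∪ (witB.biUnion cnt) := by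
    intro E hE
    rw [Finset.mem_filter] at hE
    obtain ⟨hEmem, hEbad⟩ := hE
    have hEsub : E ⊆ allE n := (Finset.mem_powersetCard.mp hEmem).1
    obtain ⟨F, hFE, hclass⟩ := bad_extract hk E hEbad
    have hFallE : F ⊆ allE n := hFE.trans hEsub
    rcases hclass with ⟨h1, h2, h3⟩ | ⟨h1, h2⟩
    · apply Finset.mem_union_left
      rw [Finset.mem_biUnion]
      refine ⟨F.card, Finset.mem_Icc.mpr ⟨h1, h2⟩, ?_⟩
      rw [Finset.mem_biUnion]
      refine ⟨F, ?_, ?_⟩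
      · rw [hwitA, Finset.mem_filter, Finset.mem_powersetCard]
        exact ⟨⟨hFallE, rfl⟩, h3⟩
      · rw [hcnt, Finset.mem_filter]; exact ⟨hEmem, hFE⟩
    · apply Finset.mem_union_right
      rw [Finset.mem_biUnion]
      refine ⟨F, ?_, ?_⟩
      · rw [hwitB, Finset.mem_filter, Finset.mem_powersetCard]
        exact ⟨⟨hFallE, h1⟩, h1 ▸ h2⟩
      · rw [hcnt, Finset.mem_filter]; exact ⟨hEmem, hFE⟩
  calc (((allE n).powersetCard N).filter
      (fun E : Finset (Sym2 (Fin n)) =>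
        ¬ TreeSizeLE (SimpleGraph.fromEdgeSet (↑E : Set (Sym2 (Fin n)))) (k-1))).card
      ≤ (((Finset.Icc 1 k).biUnion (fun m => (witA m).biUnion cnt)) ∪ (witB.biUnion cnt)).card :=
        Finset.card_le_card hsub
    _ ≤ ((Finset.Icc 1 k).biUnion (fun m => (witA m).biUnion cnt)).card
        + (witB.biUnion cnt).card := Finset.card_union_le _ _
    _ ≤ (∑ m ∈ Finset.Icc 1 k, ((witA m).biUnion cnt).card)
        + (witB.biUnion cnt).card := by
        exact Nat.add_le_add_right Finset.card_biUnion_le _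
    _ ≤ (∑ m ∈ Finset.Icc 1 k, n.choose m * 2 ^ (m*m) *
          (if m ≤ N then ((allE n).card - m).choose (N - m) else 0))
        + n.choose (k+1) * 2 ^ ((k+1)*(k+1)) *
          (if k ≤ N then ((allE n).card - k).choose (N - k) else 0) := by
        apply Nat.add_le_add
        · apply Finset.sum_le_sum
          intro m hm
          rw [Finset.mem_Icc] at hm
          calc ((witA m).biUnion cnt).card ≤ ∑ F ∈ witA m, (cnt F).card :=
                Finset.card_biUnion_le
            _ ≤ (witA m).card • (if m ≤ N then ((allE n).card - m).choose (N - m) else 0) := by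
                apply Finset.sum_le_card_nsmul
                intro F hF
                rw [hwitA, Finset.mem_filter, Finset.mem_powersetCard] at hF
                have := count_superset N F hF.1.1
                rwa [hF.1.2] at this
            _ ≤ n.choose m * 2 ^ (m*m) *
                (if m ≤ N then ((allE n).card - m).choose (N - m) else 0) := by
                rw [smul_eq_mul]
                exact Nat.mul_le_mul_right _ (wit_count m m (by omega))
        · calc (witB.biUnion cnt).card ≤ ∑ F ∈ witB, (cnt F).card := Finset.card_biUnion_le
            _ ≤ witB.card • (if k ≤ N then ((allE n).card - k).choose (N - k) else 0) := by
                apply Finset.sum_le_card_nsmul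
                intro F hF
                rw [hwitB, Finset.mem_filter, Finset.mem_powersetCard] at hF
                have := count_superset N F hF.1.1
                rwa [hF.1.2] at this
            _ ≤ n.choose (k+1) * 2 ^ ((k+1)*(k+1)) *
                (if k ≤ N then ((allE n).card - k).choose (N - k) else 0) := by
                rw [smul_eq_mul]
                exact Nat.mul_le_mul_right _ (wit_count k (k+1) hkn)


lemma ratio_real {M Nn : ℕ} (m : ℕ) (hNM : Nn ≤ M) (hmM : m < M) :
    ((if m ≤ Nn then (M - m).choose (Nn - m) else 0 : ℕ) : ℝ) / ((M.choose Nn : ℕ) : ℝ)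
      ≤ ((Nn : ℝ) / ((M : ℝ) - (m : ℝ))) ^ m := by
  have hMm : (0:ℝ) < (M:ℝ) - m := by
    have : (m:ℝ) < M := by exact_mod_cast hmM
    linarith
  have hD : (0:ℝ) < ((M.choose Nn : ℕ) : ℝ) := by
    exact_mod_cast Nat.choose_pos hNM
  split_ifs with h
  · have key := choose_ratio hNM m h
    have keyR : ((M - m).choose (Nn - m) : ℝ) * ((M:ℝ) - m) ^ m
        ≤ (M.choose Nn : ℝ) * (Nn : ℝ) ^ m := by
      have hcast : ((M - m : ℕ) : ℝ) = (M:ℝ) - m := by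
        rw [Nat.cast_sub hmM.le]
      calc ((M - m).choose (Nn - m) : ℝ) * ((M:ℝ) - m) ^ m
          = (((M - m).choose (Nn - m) * (M - m) ^ m : ℕ) : ℝ) := by
            push_cast [hcast]; ring
        _ ≤ ((M.choose Nn * Nn ^ m : ℕ) : ℝ) := by exact_mod_cast key
        _ = (M.choose Nn : ℝ) * (Nn : ℝ) ^ m := by push_cast; ring
    rw [div_pow, div_le_div_iff₀ hD (by positivity)]
    linarith [keyR]
  · simp only [Nat.cast_zero, zero_div]
    positivity

end Helpers

/-- Fix `k ≥ 1`. If `N(n) = o(n^(1-1/k))`, then a.a.s. every connected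
component of the uniformly random graph on `n` vertices with `N(n)` edges is a tree with at
most `k-1` edges (equivalently, the graph contains no cycle and no connected subgraph with
`k` or more edges). -/
theorem statement16 (k : ℕ) (hk : 1 ≤ k) (N : ℕ → ℕ)
    (hN : (fun n : ℕ => (N n : ℝ)) =o[atTop]
      (fun n : ℕ => (n : ℝ) ^ ((1 : ℝ) - 1 / (k : ℝ)))) :
    Tendsto (fun n : ℕ => graphProb n (N n) (fun G => TreeSizeLE G (k - 1)))
      atTop (nhds 1) := by
  have hkR : (0:ℝ) < (k:ℝ) := by exact_mod_cast hk
  -- z → 0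
  have hz : Tendsto (fun n : ℕ => (N n : ℝ) / (n:ℝ) ^ ((1:ℝ) - 1/(k:ℝ))) atTop (nhds 0) :=
    hN.tendsto_div_nhds_zero
  -- x := Nn / n → 0
  have hx : Tendsto (fun n : ℕ => (N n : ℝ) / (n:ℝ)) atTop (nhds 0) := by
    apply squeeze_zero' (by filter_upwards with n; positivity)
      (g := fun n : ℕ => (N n : ℝ) / (n:ℝ) ^ ((1:ℝ) - 1/(k:ℝ))) ?_ hz
    filter_upwards [eventually_ge_atTop 1] with n hn
    have hn1 : (1:ℝ) ≤ (n:ℝ) := by exact_mod_cast hn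
    have hle : (n:ℝ) ^ ((1:ℝ) - 1/(k:ℝ)) ≤ (n:ℝ) := by
      calc (n:ℝ) ^ ((1:ℝ) - 1/(k:ℝ)) ≤ (n:ℝ) ^ (1:ℝ) := by
            apply Real.rpow_le_rpow_of_exponent_le hn1
            have : 0 ≤ 1/(k:ℝ) := by positivity
            linarith
        _ = (n:ℝ) := Real.rpow_one _
    apply div_le_div_of_nonneg_left (by positivity) _ hle
    · positivity
  -- w := Nn^k / n^(k-1) → 0
  have hw : Tendsto (fun n : ℕ => (N n : ℝ)^k / (n:ℝ)^(k-1)) atTop (nhds 0) := by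
    have hzk : Tendsto (fun n : ℕ => ((N n : ℝ) / (n:ℝ) ^ ((1:ℝ) - 1/(k:ℝ)))^k)
        atTop (nhds 0) := by
      have := hz.pow k
      simpa [zero_pow (by omega : k ≠ 0)] using this
    apply Tendsto.congr' ?_ hzk
    filter_upwards [eventually_ge_atTop 1] with n hn
    have hn0 : (0:ℝ) < (n:ℝ) := by exact_mod_cast Nat.lt_of_lt_of_le Nat.zero_lt_one hn
    rw [div_pow]
    congr 1
    rw [← Real.rpow_natCast ((n:ℝ) ^ ((1:ℝ) - 1/(k:ℝ))) k, ← Real.rpow_mul hn0.le]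
    have h1 : ((1:ℝ) - 1/(k:ℝ)) * (k:ℝ) = (k:ℝ) - 1 := by field_simp
    have h2 : ((k:ℝ) - 1) = ((k - 1 : ℕ) : ℝ) := by
      rw [Nat.cast_sub hk]; simp
    rw [h1, h2, Real.rpow_natCast]
  -- eventually N n ≤ n.choose 2
  have hNch : ∀ᶠ n : ℕ in atTop, N n ≤ n.choose 2 := by
    have hev := hx.eventually (eventually_lt_nhds (by norm_num : (0:ℝ) < 1))
    filter_upwards [hev, eventually_ge_atTop 3] with n h1 h3
    have hn0 : (0:ℝ) < (n:ℝ) := by positivity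
    have hNn : (N n : ℝ) < (n:ℝ) := by
      have := (div_lt_one hn0).mp h1
      exact this
    have hNnn : N n ≤ n := by exact_mod_cast hNn.le
    refine hNnn.trans ?_
    rw [Nat.choose_two_right, Nat.le_div_iff_mul_le (by norm_num : 0 < 2)]
    exact Nat.mul_le_mul_left n (by omega)
  -- definitions
  set D : ℕ → ℝ := fun n => (((n.choose 2).choose (N n) : ℕ) : ℝ) with hD
  set badc : ℕ → ℕ := fun n => (((allE n).powersetCard (N n)).filter
      (fun E : Finset (Sym2 (Fin n)) =>
        ¬ TreeSizeLE (SimpleGraph.fromEdgeSet (↑E : Set (Sym2 (Fin n)))) (k-1))).card with hbadc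
  set badr : ℕ → ℝ := fun n => (badc n : ℝ) / D n with hbadr
  -- Step 1 : probability identity
  have heq : ∀ᶠ n : ℕ in atTop,
      graphProb n (N n) (fun G => TreeSizeLE G (k - 1)) = 1 - badr n := by
    filter_upwards [hNch] with n hn
    have hD0 : (0:ℝ) < D n := by
      show (0:ℝ) < (((n.choose 2).choose (N n) : ℕ) : ℝ)
      exact_mod_cast Nat.choose_pos hn
    rw [graphProb_eq]
    have hsplit := Finset.card_filter_add_card_filter_not
      (s := (allE n).powersetCard (N n))
      (p := fun E : Finset (Sym2 (Fin n)) =>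
        TreeSizeLE (SimpleGraph.fromEdgeSet (↑E : Set (Sym2 (Fin n)))) (k-1))
    have htot : ((allE n).powersetCard (N n)).card = (n.choose 2).choose (N n) := by
      rw [Finset.card_powersetCard, card_allE]
    rw [htot] at hsplit
    have hcast : ((((allE n).powersetCard (N n)).filter
        (fun E : Finset (Sym2 (Fin n)) =>
          TreeSizeLE (SimpleGraph.fromEdgeSet (↑E : Set (Sym2 (Fin n)))) (k-1))).card : ℝ)
        = D n - (badc n : ℝ) := by
      show _ = (((n.choose 2).choose (N n) : ℕ) : ℝ) - _
      rw [eq_sub_iff_add_eq]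
      exact_mod_cast hsplit
    rw [hcast]
    show (D n - (badc n : ℝ)) / D n = 1 - (badc n : ℝ) / D n
    field_simp
  -- Step 2 : badr → 0
  have hbad0 : Tendsto badr atTop (nhds 0) := by
    set φ : ℕ → ℝ := fun n =>
      (∑ m ∈ Finset.Icc 1 k, (2:ℝ)^(m*m) * (4*(N n : ℝ)/(n:ℝ))^m)
      + (2:ℝ)^((k+1)*(k+1)) * 4^k * ((N n : ℝ)^k/(n:ℝ)^(k-1)) with hφ
    have hφ0 : Tendsto φ atTop (nhds 0) := by
      rw [hφ]
      have hsum : Tendsto (fun n : ℕ =>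
          ∑ m ∈ Finset.Icc 1 k, (2:ℝ)^(m*m) * (4*(N n : ℝ)/(n:ℝ))^m) atTop (nhds 0) := by
        have h0 : ∀ m ∈ Finset.Icc 1 k, Tendsto
            (fun n : ℕ => (2:ℝ)^(m*m) * (4*(N n : ℝ)/(n:ℝ))^m) atTop (nhds 0) := by
          intro m hm
          rw [Finset.mem_Icc] at hm
          have hxm : Tendsto (fun n : ℕ => (4*(N n : ℝ)/(n:ℝ))^m) atTop (nhds 0) := by
            have h4x : Tendsto (fun n : ℕ => 4*(N n : ℝ)/(n:ℝ)) atTop (nhds 0) := by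
              have := hx.const_mul (4:ℝ)
              simpa [mul_div_assoc] using this
            have := h4x.pow m
            simpa [zero_pow (by omega : m ≠ 0)] using this
          simpa using hxm.const_mul ((2:ℝ)^(m*m))
        have := tendsto_finset_sum (Finset.Icc 1 k) h0
        simpa using this
      have hlast : Tendsto (fun n : ℕ =>
          (2:ℝ)^((k+1)*(k+1)) * 4^k * ((N n : ℝ)^k/(n:ℝ)^(k-1))) atTop (nhds 0) := by
        simpa using hw.const_mul ((2:ℝ)^((k+1)*(k+1)) * 4^k)
      simpa using hsum.add hlast
    apply squeeze_zero' ?_ ?_ hφ0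
    · filter_upwards [hNch] with n hn
      rw [hbadr]
      positivity
    · -- the main eventual bound
      filter_upwards [hNch, eventually_ge_atTop (4*k+8)] with n hNM hn
      have hn0 : (0:ℝ) < (n:ℝ) := by
        have : 0 < n := by omega
        exact_mod_cast this
      have hnR : (4*(k:ℝ)+8) ≤ (n:ℝ) := by exact_mod_cast hn
      have hD0 : (0:ℝ) < D n := by
        show (0:ℝ) < (((n.choose 2).choose (N n) : ℕ) : ℝ)
        exact_mod_cast Nat.choose_pos hNM
      set M : ℕ := n.choose 2 with hM
      have hMreal : (M:ℝ) = (n:ℝ) * ((n:ℝ)-1) / 2 := by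
        rw [hM, Nat.cast_choose_two]
      have hMm : ∀ m : ℕ, m ≤ k → (n:ℝ)^2/4 ≤ (M:ℝ) - (m:ℝ) := by
        intro m hm
        have hmk : (m:ℝ) ≤ (k:ℝ) := by exact_mod_cast hm
        nlinarith [hkR]
      have hmM : ∀ m : ℕ, m ≤ k → m < M := by
        intro m hm
        have h1 := hMm m hm
        have : (m:ℝ) < (M:ℝ) := by nlinarith
        exact_mod_cast this
      -- per-class ratio bound
      have hratio : ∀ m : ℕ, m ≤ k →
          ((if m ≤ N n then (M - m).choose (N n - m) else 0 : ℕ) : ℝ) / D n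
            ≤ (4*(N n : ℝ)/(n:ℝ)^2)^m := by
        intro m hm
        have h1 := ratio_real (M := M) (Nn := N n) m hNM (hmM m hm)
        refine h1.trans ?_
        apply pow_le_pow_left₀ ?_ ?_ m
        · apply div_nonneg (by positivity)
          have := hMm m hm
          nlinarith
        · have hMm' := hMm m hm
          have hq : (4:ℝ)*(N n : ℝ)/(n:ℝ)^2 = (N n : ℝ) / ((n:ℝ)^2/4) := by
            field_simp
          rw [hq]
          apply div_le_div_of_nonneg_left (by positivity) (by positivity) hMm'
      -- cast the counting bound
      have hcount := badcount (n := n) (N n) hk (by omega)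
      rw [card_allE n, ← hM] at hcount
      have hcountR : (badc n : ℝ) ≤
          (∑ m ∈ Finset.Icc 1 k, ((n.choose m : ℝ) * 2^(m*m) *
            ((if m ≤ N n then (M - m).choose (N n - m) else 0 : ℕ) : ℝ)))
          + (n.choose (k+1) : ℝ) * 2^((k+1)*(k+1)) *
            ((if k ≤ N n then (M - k).choose (N n - k) else 0 : ℕ) : ℝ) := by
      -- cast hcount
        rw [hbadc]
        push_cast
        exact_mod_cast hcount
      have hchoosem : ∀ m : ℕ, (n.choose m : ℝ) ≤ (n:ℝ)^m := by
        intro m; exact_mod_cast Nat.choose_le_pow n m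
      have hgnn : ∀ m : ℕ,
          (0:ℝ) ≤ ((if m ≤ N n then (M - m).choose (N n - m) else 0 : ℕ) : ℝ) / D n := by
        intro m; positivity
      have hbase : (n:ℝ) * (4*(N n:ℝ)/(n:ℝ)^2) = 4*(N n:ℝ)/(n:ℝ) := by
        field_simp
      show (badc n : ℝ) / D n ≤ _
      calc (badc n : ℝ) / D n
          ≤ ((∑ m ∈ Finset.Icc 1 k, ((n.choose m : ℝ) * 2^(m*m) *
              ((if m ≤ N n then (M - m).choose (N n - m) else 0 : ℕ) : ℝ)))
            + (n.choose (k+1) : ℝ) * 2^((k+1)*(k+1)) *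
              ((if k ≤ N n then (M - k).choose (N n - k) else 0 : ℕ) : ℝ)) / D n := by
            exact (div_le_div_iff_of_pos_right hD0).mpr hcountR
        _ = (∑ m ∈ Finset.Icc 1 k, ((n.choose m : ℝ) * 2^(m*m) *
              (((if m ≤ N n then (M - m).choose (N n - m) else 0 : ℕ) : ℝ) / D n)))
            + (n.choose (k+1) : ℝ) * 2^((k+1)*(k+1)) *
              (((if k ≤ N n then (M - k).choose (N n - k) else 0 : ℕ) : ℝ) / D n) := by
            rw [add_div, Finset.sum_div]
            congr 1
            · apply Finset.sum_congr rfl; intro m _; ring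
            · ring
        _ ≤ (∑ m ∈ Finset.Icc 1 k, (2:ℝ)^(m*m) * (4*(N n : ℝ)/(n:ℝ))^m)
            + (2:ℝ)^((k+1)*(k+1)) * 4^k * ((N n : ℝ)^k/(n:ℝ)^(k-1)) := by
            apply add_le_add
            · apply Finset.sum_le_sum
              intro m hm
              rw [Finset.mem_Icc] at hm
              calc (n.choose m : ℝ) * 2^(m*m) *
                    (((if m ≤ N n then (M - m).choose (N n - m) else 0 : ℕ) : ℝ) / D n)
                  ≤ (n:ℝ)^m * 2^(m*m) * (4*(N n : ℝ)/(n:ℝ)^2)^m := by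
                    apply mul_le_mul
                    · exact mul_le_mul_of_nonneg_right (hchoosem m) (by positivity)
                    · exact hratio m hm.2
                    · exact hgnn m
                    · positivity
                _ = (2:ℝ)^(m*m) * ((n:ℝ) * (4*(N n : ℝ)/(n:ℝ)^2))^m := by
                    rw [mul_pow]; ring
                _ = (2:ℝ)^(m*m) * (4*(N n : ℝ)/(n:ℝ))^m := by rw [hbase]
            · calc (n.choose (k+1) : ℝ) * 2^((k+1)*(k+1)) *
                    (((if k ≤ N n then (M - k).choose (N n - k) else 0 : ℕ) : ℝ) / D n)
                  ≤ (n:ℝ)^(k+1) * 2^((k+1)*(k+1)) * (4*(N n : ℝ)/(n:ℝ)^2)^k := by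
                    apply mul_le_mul
                    · exact mul_le_mul_of_nonneg_right (hchoosem (k+1)) (by positivity)
                    · exact hratio k le_rfl
                    · exact hgnn k
                    · positivity
                _ = (2:ℝ)^((k+1)*(k+1)) * 4^k * ((N n : ℝ)^k/(n:ℝ)^(k-1)) := by
                    have hpow : ((n:ℝ)^2)^k = (n:ℝ)^(k+1) * (n:ℝ)^(k-1) := by
                      rw [← pow_mul, ← pow_add]; congr 1; omega
                    rw [div_pow, mul_pow, hpow]
                    have hne : (n:ℝ) ≠ 0 := ne_of_gt hn0
                    field_simp
  -- Step 3 : conclude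
  have hlim : Tendsto (fun n : ℕ => 1 - badr n) atTop (nhds 1) := by
    have := (tendsto_const_nhds (x := (1:ℝ)) (f := atTop)).sub hbad0
    simpa using this
  have heq' : (fun n : ℕ => 1 - badr n) =ᶠ[atTop]
      (fun n : ℕ => graphProb n (N n) (fun G => TreeSizeLE G (k - 1))) := by
    filter_upwards [heq] with n h
    exact h.symm
  exact Tendsto.congr' heq' hlim
end
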